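/- Let 𝒜 be a prestack on a small category 𝒰 over a commutative ring k and M an 𝒜-bimodule. Let φ be a right k-reduced normalized cochain in C̄^{p,q}(𝒜,M). If d_simp(φ) ∈ C̄^{p+1,q}(𝒜,M) is right (k+1)-reduced, then there exists a right k-reduced normalized cochain ψ ∈ C̄^{p−1,q}(𝒜,M) such that φ − d_simp(ψ) is right (k+1)-reduced. -/

import Mathlib

open CategoryTheory

universe w₁ w₂ v₁ u₁ u₂

/-- A prestack on a small category `𝒰`, with values in `k`-linear categories. The family of
categories is given by `A` together with its category/preadditive/linear instances; the prestack
structure records the restriction functors, their strict unitality, and the coherent twist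
isomorphisms `c^{u,v} : v^* u^* ≅ (uv)^*`. -/
structure Prestack (k : Type u₁) [CommRing k] (𝒰 : Type u₂) [Category.{v₁} 𝒰]
    (A : 𝒰 → Type w₁) [∀ U, Category.{w₂} (A U)] [∀ U, Preadditive (A U)]
    [∀ U, Linear k (A U)] where
  /-- restriction functor `u^* : A(U) ⥤ A(V)` for `u : V ⟶ U` -/
  res : ∀ {V U : 𝒰}, (V ⟶ U) → (A U ⥤ A V)
  res_id : ∀ U : 𝒰, res (𝟙 U) = 𝟭 (A U)
  resAdditive : ∀ {V U : 𝒰} (u : V ⟶ U), (res u).Additive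
  resLinear : ∀ {V U : 𝒰} (u : V ⟶ U), letI := resAdditive u; (res u).Linear k
  /-- the twist `c^{u,v} : v^* u^* ≅ (uv)^*`; here for `v : W ⟶ V`, `u : V ⟶ U`,
  `twist v u : res u ⋙ res v ≅ res (v ≫ u)`. -/
  twist : ∀ {W V U : 𝒰} (v : W ⟶ V) (u : V ⟶ U), res u ⋙ res v ≅ res (v ≫ u)
  twist_id_left : ∀ {V U : 𝒰} (u : V ⟶ U),
    twist (𝟙 V) u = eqToIso (by rw [res_id, Functor.comp_id, Category.id_comp])
  twist_id_right : ∀ {W V : 𝒰} (v : W ⟶ V),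
    twist v (𝟙 V) = eqToIso (by rw [res_id, Functor.id_comp, Category.comp_id])
  coherence : ∀ {T W V U : 𝒰} (w : T ⟶ W) (v : W ⟶ V) (u : V ⟶ U),
    CategoryTheory.Functor.whiskerLeft (res u) (twist w v).hom ≫ (twist (w ≫ v) u).hom =
      CategoryTheory.Functor.whiskerRight (twist v u).hom (res w) ≫ (twist w (v ≫ u)).hom ≫
        eqToHom (by rw [Category.assoc])

/-- Composable chains of morphisms in a category; `Chain C S T n` is the type of
`n`-simplices in the nerve of `C` from `S` to `T`. -/
inductive Chain (C : Type u₂) [Category.{v₁} C] : C → C → ℕ → Type (max u₂ v₁)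
  | nil (U : C) : Chain C U U 0
  | cons {S M T : C} {n : ℕ} (u : S ⟶ M) (σ : Chain C M T n) : Chain C S T (n + 1)

namespace Chain

variable {C : Type u₂} [Category.{v₁} C]

/-- the composite of a chain -/
def comp : ∀ {S T : C} {n : ℕ}, Chain C S T n → (S ⟶ T)
  | _, _, _, .nil U => 𝟙 U
  | _, _, _, .cons u (.nil _) => u
  | _, _, _, .cons u (.cons v σ) => u ≫ (Chain.cons v σ).comp

/-- cast a chain along an equality of lengths -/
def cast' {S T : C} {n m : ℕ} (h : n = m) (σ : Chain C S T n) : Chain C S T m := h ▸ σ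

@[simp] theorem comp_cast' {S T : C} {n m : ℕ} (h : n = m) (σ : Chain C S T n) :
    (σ.cast' h).comp = σ.comp := by subst h; rfl

theorem comp_cons' {S M T : C} {n : ℕ} (u : S ⟶ M) (σ : Chain C M T n) :
    (Chain.cons u σ).comp = u ≫ σ.comp := by
  cases σ <;> simp [comp]

/-- composing two adjacent maps in a chain (at position `i`, counted from the source) -/
def del : ∀ {S T : C} {n : ℕ}, Chain C S T (n + 2) → ℕ → Chain C S T (n + 1)
  | _, _, _, .cons u (.cons v (.nil _)), _ => .cons (u ≫ v) (.nil _)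
  | _, _, _, .cons u (.cons v (.cons w σ)), 0 => .cons (u ≫ v) (.cons w σ)
  | _, _, _, .cons u (.cons v (.cons w σ)), (i + 1) => .cons u (del (.cons v (.cons w σ)) i)

theorem comp_del : ∀ {S T : C} {n : ℕ} (σ : Chain C S T (n + 2)) (i : ℕ),
    (σ.del i).comp = σ.comp
  | _, _, _, .cons u (.cons v (.nil _)), _ => by simp [del, comp]
  | _, _, _, .cons u (.cons v (.cons w σ)), 0 => by
      simp [del, comp, comp_cons', Category.assoc]
  | _, _, _, .cons u (.cons v (.cons w σ)), (i + 1) => by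
      have := comp_del (.cons v (.cons w σ)) i
      simp only [del, comp_cons'] at *
      rw [this]

/-- append two chains -/
def append : ∀ {S M T : C} {n m : ℕ}, Chain C S M n → Chain C M T m → Chain C S T (n + m)
  | _, _, _, _, m, .nil _, τ => Chain.cast' (by omega) τ
  | _, _, _, _, _, .cons u σ, τ => Chain.cast' (by omega) (Chain.cons u (append σ τ))

/-- append a morphism at the target end of a chain -/
def snoc : ∀ {S M T : C} {n : ℕ}, Chain C S M n → (M ⟶ T) → Chain C S T (n + 1)
  | _, _, _, _, .nil _, f => .cons f (.nil _)
  | _, _, _, _, .cons u σ, f => .cons u (snoc σ f)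

/-- the image of a chain under a functor -/
def mapC {D : Type u₁} [Category.{w₁} D] (F : C ⥤ D) :
    ∀ {S T : C} {n : ℕ}, Chain C S T n → Chain D (F.obj S) (F.obj T) n
  | _, _, _, .nil U => .nil (F.obj U)
  | _, _, _, .cons u σ => .cons (F.map u) (mapC F σ)

/-- a chain contains an identity morphism -/
def HasId : ∀ {S T : C} {n : ℕ}, Chain C S T n → Prop
  | _, _, _, .nil _ => False
  | S, _, _, .cons (M := M) u σ => (∃ h : S = M, HEq u (𝟙 S)) ∨ σ.HasId

/-- a chain (of length `n`) is right `kk`-degenerate: it has an identity among its last `kk`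
entries, i.e. `u_i = 1` for some `n - kk + 1 ≤ i ≤ n` -/
def RightDeg : ∀ {S T : C} {n : ℕ}, Chain C S T n → ℕ → Prop
  | _, _, _, .nil _, _ => False
  | S, _, n + 1, .cons (M := M) u σ, kk => ((n + 1 ≤ kk) ∧ ∃ h : S = M, HEq u (𝟙 S)) ∨ σ.RightDeg kk

end Chain
section CoreB

open CategoryTheory

variable {k : Type u₁} [CommRing k] {𝒰 : Type u₂} [Category.{v₁} 𝒰]
  {A : 𝒰 → Type w₁} [∀ U, Category.{w₂} (A U)] [∀ U, Preadditive (A U)]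
  [∀ U, Linear k (A U)]

namespace Chain

variable (𝒜 : Prestack k 𝒰 A)

/-- `σ^⋆ = u_1^* u_2^* ⋯ u_p^*` -/
def star : ∀ {S T : 𝒰} {n : ℕ}, Chain 𝒰 S T n → (A T ⥤ A S)
  | _, _, _, .nil U => 𝟭 (A U)
  | _, _, _, .cons u σ => star σ ⋙ 𝒜.res u

/-- `σ^* = (u_p ⋯ u_2 u_1)^*` -/
def ast : ∀ {S T : 𝒰} {n : ℕ}, Chain 𝒰 S T n → (A T ⥤ A S)
  | _, _, _, .nil U => 𝟭 (A U)
  | _, _, _, .cons u σ => 𝒜.res (Chain.cons u σ).comp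

theorem res_comp_eq_ast : ∀ {S T : 𝒰} {n : ℕ} (σ : Chain 𝒰 S T n), 𝒜.res σ.comp = σ.ast 𝒜
  | _, _, _, .nil U => by simp [Chain.comp, Chain.ast, 𝒜.res_id]
  | _, _, _, .cons u σ => rfl

@[simp] theorem star_cast' {S T : 𝒰} {n m : ℕ} (h : n = m) (σ : Chain 𝒰 S T n) :
    (σ.cast' h).star 𝒜 = σ.star 𝒜 := by subst h; rfl

@[simp] theorem ast_cast' {S T : 𝒰} {n m : ℕ} (h : n = m) (σ : Chain 𝒰 S T n) :
    (σ.cast' h).ast 𝒜 = σ.ast 𝒜 := by subst h; rfl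

/-- the natural transformation `ε^{σ,i} : σ^⋆ ⟶ (∂_i σ)^⋆` obtained by twisting the
maps at positions `i, i+1` of `σ` (0-indexed from the source). -/
def eps : ∀ {S T : 𝒰} {n : ℕ} (σ : Chain 𝒰 S T (n + 2)) (i : ℕ),
    (σ.star 𝒜 ⟶ (σ.del i).star 𝒜)
  | _, _, _, .cons u (.cons v (.nil _)), _ => (𝒜.twist u v).hom
  | _, _, _, .cons u (.cons v (.cons w σ)), 0 =>
      CategoryTheory.Functor.whiskerLeft ((Chain.cons w σ).star 𝒜) (𝒜.twist u v).hom
  | _, _, _, .cons u (.cons v (.cons w σ)), (i + 1) =>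
      CategoryTheory.Functor.whiskerRight (eps (.cons v (.cons w σ)) i) (𝒜.res u)

end Chain

/-- The type of (formal) paths from `σ^⋆` to `σ^*`, for a simplex `σ` in the nerve of `𝒰`,
in the sense of Dinh Van–Lowen: a path of a 1-simplex is empty; the unique path of a
2-simplex is the twist `c^{u_1,u_2}`; a path of an `n`-simplex (`n ≥ 3`) is a path of some
`∂_i σ` together with the natural transformation `ε^{σ,i}`. -/
inductive PathD : ∀ {S T : 𝒰} {n : ℕ}, Chain 𝒰 S T (n + 1) → Type (max u₂ v₁)
  | one {S T : 𝒰} (σ : Chain 𝒰 S T 1) : PathD σ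
  | base {S T : 𝒰} (σ : Chain 𝒰 S T 2) : PathD σ
  | step {S T : 𝒰} {n : ℕ} (σ : Chain 𝒰 S T (n + 3)) (i : Fin (n + 2))
      (r : PathD (σ.del i.val)) : PathD σ

namespace PathD

/-- the sign of a path -/
def sign : ∀ {S T : 𝒰} {n : ℕ} {σ : Chain 𝒰 S T (n + 1)}, PathD σ → ℤ
  | _, _, _, _, .one _ => 1
  | _, _, _, _, .base _ => -1
  | _, _, _, _, .step _ i r => (-1) ^ (i.val + 1) * r.sign

variable (𝒜 : Prestack k 𝒰 A)

/-- the underlying composable sequence of natural transformations of a path, starting at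
`σ^⋆`, together with its endpoint (which is propositionally equal to `σ^*`). -/
def toNT : ∀ {S T : 𝒰} {n : ℕ} {σ : Chain 𝒰 S T (n + 1)}, PathD σ →
    Σ G : A T ⥤ A S, Chain (A T ⥤ A S) (σ.star 𝒜) G n
  | _, _, _, _, .one σ => ⟨σ.star 𝒜, .nil _⟩
  | _, _, _, _, .base (.cons u (.cons v (.nil _))) =>
      ⟨𝒜.res (u ≫ v), .cons (𝒜.twist u v).hom (.nil _)⟩
  | _, _, _, _, .step σ i r => ⟨(toNT r).1, .cons (σ.eps 𝒜 i.val) (toNT r).2⟩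

/-- the list of all paths of a given simplex -/
def all : ∀ {S T : 𝒰} {n : ℕ} (σ : Chain 𝒰 S T (n + 1)), List (PathD σ)
  | _, _, 0, σ => [.one σ]
  | _, _, 1, σ => [.base σ]
  | _, _, (n + 2), σ =>
      (List.finRange (n + 2)).flatMap (fun i => (all (σ.del i.val)).map (PathD.step σ i))

end PathD

end CoreB
section CoreC

open CategoryTheory

/-- An `(m,l)`-shuffle permutation, encoded as a word: `left` advances the first strand (with `m`
entries), `right` advances the second strand (with `l` entries). -/
inductive Shuffle : ℕ → ℕ → Type
  | nil : Shuffle 0 0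
  | left {m l : ℕ} (s : Shuffle m l) : Shuffle (m + 1) l
  | right {m l : ℕ} (s : Shuffle m l) : Shuffle m (l + 1)

namespace Shuffle

/-- the sign of a shuffle permutation -/
def sign : ∀ {m l : ℕ}, Shuffle m l → ℤ
  | _, _, .nil => 1
  | _, _, .left s => s.sign
  | _, _, .right (m := m) s => (-1) ^ m * s.sign

/-- all `(m,l)`-shuffles -/
def all : ∀ m l : ℕ, List (Shuffle m l)
  | 0, 0 => [.nil]
  | m + 1, 0 => (all m 0).map .left
  | 0, l + 1 => (all 0 l).map .right
  | m + 1, l + 1 => ((all m (l + 1)).map .left) ++ ((all (m + 1) l).map .right)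

end Shuffle

variable {C D E : Type*} [Category C] [Category D] [Category E]

/-- The shuffle product, with respect to evaluation of functors, of a simplex `a` in `C` and a
simplex `ρ` of natural transformations in `C ⥤ D`: a `left` step applies the current functor to
the next morphism of `a`, a `right` step evaluates the next natural transformation of `ρ` at the
current object. -/
def shEval : ∀ {m l : ℕ}, Shuffle m l → ∀ {X B : C} {F G : C ⥤ D},
    Chain C X B m → Chain (C ⥤ D) F G l → Chain D (F.obj X) (G.obj B) (m + l)
  | _, _, .nil, _, _, _, _, .nil _, .nil _ => .nil _
  | _, _, .left s, _, _, F, _, .cons f a, ρ =>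
      Chain.cast' (by omega) (Chain.cons (F.map f) (shEval s a ρ))
  | _, _, .right s, X, _, _, _, a, .cons η ρ =>
      Chain.cast' (by omega) (Chain.cons (η.app X) (shEval s a ρ))

/-- The shuffle product, with respect to composition of functors, of a simplex `ρ` of natural
transformations in `C ⥤ D` (inner) and a simplex `τ` of natural transformations in `D ⥤ E`
(outer): steps are whiskered with the current functor on the other side. -/
def shComp : ∀ {m l : ℕ}, Shuffle m l → ∀ {F F' : C ⥤ D} {G G' : D ⥤ E},
    Chain (C ⥤ D) F F' m → Chain (D ⥤ E) G G' l →
      Chain (C ⥤ E) (F ⋙ G) (F' ⋙ G') (m + l)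
  | _, _, .nil, _, _, _, _, .nil _, .nil _ => .nil _
  | _, _, .left s, _, _, G, _, .cons η ρ, τ =>
      Chain.cast' (by omega) (Chain.cons (CategoryTheory.Functor.whiskerRight η G) (shComp s ρ τ))
  | _, _, .right s, F, _, _, _, ρ, .cons θ τ =>
      Chain.cast' (by omega) (Chain.cons (CategoryTheory.Functor.whiskerLeft F θ) (shComp s ρ τ))

end CoreC
section CoreD

open CategoryTheory

variable {k : Type u₁} [CommRing k] {𝒰 : Type u₂} [Category.{v₁} 𝒰]
  {A : 𝒰 → Type w₁} [∀ U, Category.{w₂} (A U)] [∀ U, Preadditive (A U)]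
  [∀ U, Linear k (A U)]

namespace Chain

variable {C : Type u₂} [Category.{v₁} C]

/-- split off the last morphism of a chain -/
def initLast : ∀ {S T : C} {n : ℕ}, Chain C S T (n + 1) → Σ M : C, Chain C S M n × (M ⟶ T)
  | _, _, _, .cons u (.nil _) => ⟨_, .nil _, u⟩
  | _, _, _, .cons u (.cons v σ) =>
      let x := (Chain.cons v σ).initLast; ⟨x.1, .cons u x.2.1, x.2.2⟩

variable (𝒜 : Prestack k 𝒰 A)

theorem ast_del {S T : 𝒰} {n : ℕ} (σ : Chain 𝒰 S T (n + 2)) (i : ℕ) :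
    (σ.del i).ast 𝒜 = σ.ast 𝒜 := by
  rw [← res_comp_eq_ast, ← res_comp_eq_ast, comp_del]

theorem star_init : ∀ {S T : 𝒰} {n : ℕ} (σ : Chain 𝒰 S T (n + 1)),
    σ.star 𝒜 = 𝒜.res σ.initLast.2.2 ⋙ σ.initLast.2.1.star 𝒜
  | _, _, _, .cons u (.nil _) => rfl
  | _, _, _, .cons u (.cons v σ) => by
      have := star_init (Chain.cons v σ)
      simp only [initLast, star] at this ⊢
      rw [this, Functor.assoc]
      rfl

theorem comp_init : ∀ {S T : C} {n : ℕ} (σ : Chain C S T (n + 1)),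
    σ.initLast.2.1.comp ≫ σ.initLast.2.2 = σ.comp
  | _, _, _, .cons u (.nil _) => by
      change Chain.comp (Chain.nil _) ≫ u = u
      simp [comp]
  | _, _, _, .cons u (.cons v σ) => by
      have := comp_init (Chain.cons v σ)
      change (Chain.cons u (Chain.cons v σ).initLast.2.1).comp ≫ (Chain.cons v σ).initLast.2.2 = _
      rw [comp_cons' u, Category.assoc, this, comp_cons' u]

end Chain

theorem PathD.end_eq (𝒜 : Prestack k 𝒰 A) :
    ∀ {S T : 𝒰} {n : ℕ} {σ : Chain 𝒰 S T (n + 1)} (r : PathD σ),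
      (r.toNT 𝒜).1 = 𝒜.res σ.comp
  | _, _, _, _, .one (.cons u (.nil _)) => rfl
  | _, _, _, _, .base (.cons u (.cons v (.nil _))) => rfl
  | _, _, _, _, .step σ i r => by
      rw [show ((PathD.step σ i r).toNT 𝒜).1 = (r.toNT 𝒜).1 from rfl, PathD.end_eq 𝒜 r,
        Chain.comp_del]

/-- A bimodule over a prestack `𝒜`. -/
structure Bimodule (𝒜 : Prestack k 𝒰 A) where
  /-- the value `M^U(X, Y)` -/
  val : ∀ (U : 𝒰), A U → A U → Type w₂
  addCommGroup : ∀ U X Y, AddCommGroup (val U X Y)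
  module : ∀ U X Y, letI := addCommGroup U X Y; Module k (val U X Y)
  /-- left action: composition with a morphism on the target side -/
  actL : ∀ {U : 𝒰} {X Y Y' : A U}, (Y ⟶ Y') → val U X Y → val U X Y'
  /-- right action: composition with a morphism on the source side -/
  actR : ∀ {U : 𝒰} {X X' Y : A U}, val U X Y → (X' ⟶ X) → val U X' Y
  /-- restriction map `M^u : M^U(X,Y) → M^V(u^*X, u^*Y)` -/
  rst : ∀ {V U : 𝒰} (u : V ⟶ U) {X Y : A U}, val U X Y →
    val V ((𝒜.res u).obj X) ((𝒜.res u).obj Y)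
  actL_id : ∀ {U : 𝒰} {X Y : A U} (x : val U X Y), actL (𝟙 Y) x = x
  actL_actL : ∀ {U : 𝒰} {X Y Y' Y'' : A U} (f : Y ⟶ Y') (g : Y' ⟶ Y'') (x : val U X Y),
    actL g (actL f x) = actL (f ≫ g) x
  actR_id : ∀ {U : 𝒰} {X Y : A U} (x : val U X Y), actR x (𝟙 X) = x
  actR_actR : ∀ {U : 𝒰} {X X' X'' Y : A U} (f : X' ⟶ X) (g : X'' ⟶ X') (x : val U X Y),
    actR (actR x f) g = actR x (g ≫ f)
  actL_actR : ∀ {U : 𝒰} {X X' Y Y' : A U} (f : X' ⟶ X) (g : Y ⟶ Y') (x : val U X Y),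
    actL g (actR x f) = actR (actL g x) f
  actL_add : ∀ {U : 𝒰} {X Y Y' : A U} (g : Y ⟶ Y') (x y : val U X Y),
    letI := addCommGroup U X Y; letI := addCommGroup U X Y';
    actL g (x + y) = actL g x + actL g y
  add_actL : ∀ {U : 𝒰} {X Y Y' : A U} (g g' : Y ⟶ Y') (x : val U X Y),
    letI := addCommGroup U X Y';
    actL (g + g') x = actL g x + actL g' x
  actR_add : ∀ {U : 𝒰} {X X' Y : A U} (f : X' ⟶ X) (x y : val U X Y),
    letI := addCommGroup U X Y; letI := addCommGroup U X' Y;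
    actR (x + y) f = actR x f + actR y f
  add_actR : ∀ {U : 𝒰} {X X' Y : A U} (f f' : X' ⟶ X) (x : val U X Y),
    letI := addCommGroup U X' Y;
    actR x (f + f') = actR x f + actR x f'
  actL_smul : ∀ {U : 𝒰} {X Y Y' : A U} (c : k) (g : Y ⟶ Y') (x : val U X Y),
    letI := addCommGroup U X Y; letI := addCommGroup U X Y';
    letI := module U X Y; letI := module U X Y';
    actL g (c • x) = c • actL g x
  actR_smul : ∀ {U : 𝒰} {X X' Y : A U} (c : k) (f : X' ⟶ X) (x : val U X Y),
    letI := addCommGroup U X Y; letI := addCommGroup U X' Y;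
    letI := module U X Y; letI := module U X' Y;
    actR (c • x) f = c • actR x f
  rst_add : ∀ {V U : 𝒰} (u : V ⟶ U) {X Y : A U} (x y : val U X Y),
    letI := addCommGroup U X Y;
    letI := addCommGroup V ((𝒜.res u).obj X) ((𝒜.res u).obj Y);
    rst u (x + y) = rst u x + rst u y
  rst_actL : ∀ {V U : 𝒰} (u : V ⟶ U) {X Y Y' : A U} (g : Y ⟶ Y') (x : val U X Y),
    rst u (actL g x) = actL ((𝒜.res u).map g) (rst u x)
  rst_actR : ∀ {V U : 𝒰} (u : V ⟶ U) {X X' Y : A U} (f : X' ⟶ X) (x : val U X Y),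
    rst u (actR x f) = actR (rst u x) ((𝒜.res u).map f)
  rst_id : ∀ {U : 𝒰} {X Y : A U} (x : val U X Y), HEq (rst (𝟙 U) x) x
  rst_comp : ∀ {W V U : 𝒰} (v : W ⟶ V) (u : V ⟶ U) {X Y : A U} (x : val U X Y),
    rst (v ≫ u) x =
      actL ((𝒜.twist v u).hom.app Y) (actR (rst v (rst u x)) ((𝒜.twist v u).inv.app X))

attribute [instance] Bimodule.addCommGroup Bimodule.module

namespace Bimodule

variable {𝒜 : Prestack k 𝒰 A} (M : Bimodule 𝒜)

/-- transport a bimodule value along equalities of objects -/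
def castV {U : 𝒰} {X X' Y Y' : A U} (h₁ : X = X') (h₂ : Y = Y') (x : M.val U X Y) :
    M.val U X' Y' := h₁ ▸ h₂ ▸ x

end Bimodule

variable (𝒜 : Prestack k 𝒰 A) (M : Bimodule 𝒜)

/-- the component of the Gerstenhaber–Schack double object for a fixed simplex `σ`:
functions sending `q`-simplices of arguments in `A T` to values of `M`. -/
def CSigma {S T : 𝒰} {p : ℕ} (σ : Chain 𝒰 S T p) (q : ℕ) : Type _ :=
  ∀ (X Y : A T) (_ : Chain (A T) X Y q), M.val S ((σ.star 𝒜).obj X) ((σ.ast 𝒜).obj Y)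

/-- the Gerstenhaber–Schack double object `𝐂^{p,q}(𝒜, M)` -/
def Cpq (p q : ℕ) : Type _ :=
  ∀ (S T : 𝒰) (σ : Chain 𝒰 S T p), CSigma 𝒜 M σ q

instance {S T : 𝒰} {p : ℕ} (σ : Chain 𝒰 S T p) (q : ℕ) :
    AddCommGroup (CSigma 𝒜 M σ q) := by unfold CSigma; infer_instance

instance (p q : ℕ) : AddCommGroup (Cpq 𝒜 M p q) := by unfold Cpq; infer_instance

/-- the total Gerstenhaber–Schack object `𝐂ⁿ_GS(𝒜,M) = ∏_{p+q=n} 𝐂^{p,q}(𝒜,M)` -/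
def CGS (n : ℕ) : Type _ := ∀ pq : {x : ℕ × ℕ // x.1 + x.2 = n}, Cpq 𝒜 M pq.1.1 pq.1.2

instance (n : ℕ) : AddCommGroup (CGS 𝒜 M n) := by unfold CGS; infer_instance

/-- the Hochschild differential, on the `σ`-component -/
def dHochS {S T : 𝒰} {p : ℕ} (σ : Chain 𝒰 S T p) {q : ℕ} (φ : CSigma 𝒜 M σ q) :
    CSigma 𝒜 M σ (q + 1) := fun X Y a =>
  match a with
  | .cons f a' =>
      (M.actL ((σ.ast 𝒜).map (Chain.cons f a').initLast.2.2)
          (φ X (Chain.cons f a').initLast.1 (Chain.cons f a').initLast.2.1))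
      + (∑ j : Fin q, ((-1 : ℤ) ^ (q - j.val)) •
          φ X Y (Chain.cast' (show q - 1 + 1 = q by have := j.isLt; omega)
            ((Chain.cast' (show q + 1 = q - 1 + 2 by have := j.isLt; omega)
              (Chain.cons f a')).del j.val)))
      + ((-1 : ℤ) ^ (q + 1)) • M.actR (φ _ Y a') ((σ.star 𝒜).map f)

/-- the Hochschild differential `𝐂^{p,q} → 𝐂^{p,q+1}` -/
def dHoch {p q : ℕ} (φ : Cpq 𝒜 M p q) : Cpq 𝒜 M p (q + 1) :=
  fun S T σ => dHochS 𝒜 M σ (φ S T σ)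

/-- the (twisted) simplicial differential `𝐂^{p,q} → 𝐂^{p+1,q}` -/
def dSimp {p q : ℕ} (φ : Cpq 𝒜 M p q) : Cpq 𝒜 M (p + 1) q := fun S T σ X Y a =>
  match σ with
  | .cons u σ' =>
      -- i = 0 : `c^{σ,1} M^{u_1} φ^{∂_0 σ}(a)`
      let t0 : M.val S (((Chain.cons u σ').star 𝒜).obj X) (((Chain.cons u σ').ast 𝒜).obj Y) :=
        M.castV
          (rfl :
            (𝒜.res u).obj ((σ'.star 𝒜).obj X) = ((Chain.cons u σ').star 𝒜).obj X)
          ((congrArg (fun f => (𝒜.res f).obj Y) (Chain.comp_cons' u σ').symm :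
            (𝒜.res (u ≫ σ'.comp)).obj Y = ((Chain.cons u σ').ast 𝒜).obj Y))
          (M.actL ((𝒜.twist u σ'.comp).hom.app Y)
            (M.castV rfl
              ((congrArg (fun F => (𝒜.res u).obj (F.obj Y))
                  (Chain.res_comp_eq_ast 𝒜 σ').symm :
                (𝒜.res u).obj ((σ'.ast 𝒜).obj Y) = (𝒜.res σ'.comp ⋙ 𝒜.res u).obj Y))
              (M.rst u (φ _ T σ' X Y a))))
      -- 1 ≤ i ≤ p : `(-1)^i φ^{∂_i σ}(a) ∘ ε^{σ,i}`
      let t1 : M.val S (((Chain.cons u σ').star 𝒜).obj X) (((Chain.cons u σ').ast 𝒜).obj Y) :=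
        ∑ j : Fin p,
          let h1 : p + 1 = p - 1 + 2 := by have := j.isLt; omega
          let h2 : p - 1 + 1 = p := by have := j.isLt; omega
          let σc := Chain.cast' h1 (Chain.cons u σ')
          let σd := Chain.cast' h2 (σc.del j.val)
          ((-1 : ℤ) ^ (j.val + 1)) •
            (M.castV
              ((congrArg (fun F => F.obj X) (Chain.star_cast' 𝒜 h1 (Chain.cons u σ')) :
                (σc.star 𝒜).obj X = ((Chain.cons u σ').star 𝒜).obj X))
              ((congrArg (fun F => F.obj Y)
                  (show σd.ast 𝒜 = (Chain.cons u σ').ast 𝒜 by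
                    rw [Chain.ast_cast', Chain.ast_del, Chain.ast_cast']) :
                (σd.ast 𝒜).obj Y = ((Chain.cons u σ').ast 𝒜).obj Y))
              (M.actR (φ S T σd X Y a)
                ((σc.eps 𝒜 j.val).app X ≫
                  eqToHom ((congrArg (fun F => F.obj X)
                    (Chain.star_cast' 𝒜 h2 (σc.del j.val))).symm))))
      -- i = p+1 : `(-1)^{p+1} c^{σ,p} φ^{∂_{p+1} σ}(u_{p+1}^* a)`
      let t2 : M.val S (((Chain.cons u σ').star 𝒜).obj X) (((Chain.cons u σ').ast 𝒜).obj Y) :=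
        ((-1 : ℤ) ^ (p + 1)) •
          (M.castV
            ((Functor.congr_obj (Chain.star_init 𝒜 (Chain.cons u σ')) X).symm :
              ((𝒜.res (Chain.cons u σ').initLast.2.2 ⋙
                (Chain.cons u σ').initLast.2.1.star 𝒜).obj X) =
                ((Chain.cons u σ').star 𝒜).obj X)
            ((congrArg (fun f => (𝒜.res f).obj Y) (Chain.comp_init (Chain.cons u σ')) :
              (𝒜.res ((Chain.cons u σ').initLast.2.1.comp ≫
                (Chain.cons u σ').initLast.2.2)).obj Y = ((Chain.cons u σ').ast 𝒜).obj Y))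
            (M.actL
              ((𝒜.twist (Chain.cons u σ').initLast.2.1.comp
                  (Chain.cons u σ').initLast.2.2).hom.app Y)
              (M.castV rfl
                ((congrArg (fun F =>
                    F.obj ((𝒜.res (Chain.cons u σ').initLast.2.2).obj Y))
                    (Chain.res_comp_eq_ast 𝒜 (Chain.cons u σ').initLast.2.1).symm :
                  ((Chain.cons u σ').initLast.2.1.ast 𝒜).obj
                      ((𝒜.res (Chain.cons u σ').initLast.2.2).obj Y) =
                    (𝒜.res (Chain.cons u σ').initLast.2.2 ⋙
                      𝒜.res (Chain.cons u σ').initLast.2.1.comp).obj Y))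
                (φ S _ (Chain.cons u σ').initLast.2.1 _ _
                  (a.mapC (𝒜.res (Chain.cons u σ').initLast.2.2))))))
      t0 + t1 + t2

end CoreD
section CoreE

open CategoryTheory

variable {k : Type u₁} [CommRing k] {𝒰 : Type u₂} [Category.{v₁} 𝒰]
  {A : 𝒰 → Type w₁} [∀ U, Category.{w₂} (A U)] [∀ U, Preadditive (A U)]
  [∀ U, Linear k (A U)]

/-- a splitting of a simplex `σ` into a prefix `L_p σ` and a suffix `R_p σ`, together with
the relations between the corresponding functors. -/
structure Split (𝒜 : Prestack k 𝒰 A) {S T : 𝒰} {n : ℕ} (σ : Chain 𝒰 S T n) where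
  p : ℕ
  j : ℕ
  hpj : p + j = n
  W : 𝒰
  pre : Chain 𝒰 S W p
  suf : Chain 𝒰 W T j
  hstar : σ.star 𝒜 = suf.star 𝒜 ⋙ pre.star 𝒜
  hcomp : pre.comp ≫ suf.comp = σ.comp

namespace Chain

variable (𝒜 : Prestack k 𝒰 A)

/-- the list of all splittings of a simplex -/
def splits : ∀ {S T : 𝒰} {n : ℕ} (σ : Chain 𝒰 S T n), List (Split 𝒜 σ)
  | _, _, _, .nil U =>
      [⟨0, 0, rfl, U, .nil U, .nil U, rfl, by simp [Chain.comp]⟩]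
  | S, T, _, .cons (n := m) u ρ =>
      ⟨0, m + 1, by omega, S, .nil S, .cons u ρ, rfl, by
        simp [Chain.comp]⟩ ::
      (splits ρ).map (fun s =>
        ⟨s.p + 1, s.j, by have := s.hpj; omega, s.W, .cons u s.pre, s.suf, by
          have := s.hstar
          simp only [Chain.star] at this ⊢
          rw [this, Functor.assoc], by
          have := s.hcomp
          rw [Chain.comp_cons', Chain.comp_cons', Category.assoc, this]⟩)

end Chain

variable (𝒜 : Prestack k 𝒰 A) (M : Bimodule 𝒜)

/-- The term of the higher differential component `d_j` (`j = s.j ≥ 2`) corresponding to a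
splitting `s` of the target simplex `σ`: the sum over all paths `r` of `R_p σ` and all
shuffles `β` of the arguments with the path components (evaluated at objects) of
`(-1)^r (-1)^β (-1)^Q c^{σ,p} φ^{L_p σ}(β(a,r))`. -/
def higherTerm {n : ℕ} (φ : CGS 𝒜 M n) {P Q : ℕ} (hPQ : P + Q = n + 1)
    {S T : 𝒰} (σ : Chain 𝒰 S T P) (s : Split 𝒜 σ) {X Y : A T}
    (a : Chain (A T) X Y Q) (h2 : 2 ≤ s.j) :
    M.val S ((σ.star 𝒜).obj X) ((σ.ast 𝒜).obj Y) :=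
  let sufc := Chain.cast' (show s.j = s.j - 2 + 1 + 1 by omega) s.suf
  (((PathD.all sufc).map fun r =>
      (((Shuffle.all Q (s.j - 2 + 1)).map fun β =>
          let φv := φ ⟨(s.p, Q + (s.j - 2) + 1), by have := s.hpj; omega⟩ S s.W s.pre
            ((sufc.star 𝒜).obj X) ((r.toNT 𝒜).1.obj Y) (shEval β a (r.toNT 𝒜).2)
          (r.sign * β.sign * (-1 : ℤ) ^ Q) •
            M.castV
              (show (s.pre.star 𝒜).obj ((sufc.star 𝒜).obj X) = (σ.star 𝒜).obj X by
                rw [Chain.star_cast', s.hstar]; try rfl)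
              (show (𝒜.res (s.pre.comp ≫ sufc.comp)).obj Y = (σ.ast 𝒜).obj Y by
                rw [Chain.comp_cast', s.hcomp, Chain.res_comp_eq_ast]; try rfl)
              (M.actL ((𝒜.twist s.pre.comp sufc.comp).hom.app Y)
                (M.castV rfl
                  (show (s.pre.ast 𝒜).obj ((r.toNT 𝒜).1.obj Y) =
                      (𝒜.res sufc.comp ⋙ 𝒜.res s.pre.comp).obj Y by
                    rw [← Chain.res_comp_eq_ast, PathD.end_eq 𝒜 r]; try rfl)
                  φv))).sum)).sum)

/-- The Gerstenhaber–Schack differential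
`d = d_0 + d_1 + ⋯ : 𝐂ⁿ_GS(𝒜,M) → 𝐂ⁿ⁺¹_GS(𝒜,M)`, where `d_0 = d_Hoch` is the Hochschild
differential, `d_1 = (-1)^{n+1} d_simp` is the twisted simplicial differential, and the higher
components `d_j` (`j ≥ 2`) are given by `higherTerm` via paths and shuffles. -/
def dGSHoch (n : ℕ) (φ : CGS 𝒜 M n) : ∀ (P Q : ℕ), P + Q = n + 1 → Cpq 𝒜 M P Q
  | _, 0, _ => 0
  | P, (Q' + 1), h => fun S T σ => dHochS 𝒜 M σ (φ ⟨(P, Q'), by omega⟩ S T σ)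

def dGSSimp (n : ℕ) (φ : CGS 𝒜 M n) : ∀ (P Q : ℕ), P + Q = n + 1 → Cpq 𝒜 M P Q
  | 0, _, _ => 0
  | (P' + 1), Q, h => ((-1 : ℤ) ^ (n + 1)) • dSimp 𝒜 M (φ ⟨(P', Q), by omega⟩)

def dGS (n : ℕ) (φ : CGS 𝒜 M n) : CGS 𝒜 M (n + 1) := fun pq S T σ X Y a =>
  -- d₀ = d_Hoch
  dGSHoch 𝒜 M n φ pq.1.1 pq.1.2 pq.2 S T σ X Y a
  -- d₁ = (-1)ⁿ⁺¹ d_simp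
  + dGSSimp 𝒜 M n φ pq.1.1 pq.1.2 pq.2 S T σ X Y a
  -- d_j for j ≥ 2, via paths and shuffles
  + (((σ.splits 𝒜).map (fun s =>
      if h2 : 2 ≤ s.j then higherTerm 𝒜 M φ pq.2 σ s a h2 else 0)).sum)

end CoreE
section CoreF

open CategoryTheory

variable {k : Type u₁} [CommRing k] {𝒰 : Type u₂} [Category.{v₁} 𝒰]
  {A : 𝒰 → Type w₁} [∀ U, Category.{w₂} (A U)] [∀ U, Preadditive (A U)]
  [∀ U, Linear k (A U)]

variable (𝒜 : Prestack k 𝒰 A) (M : Bimodule 𝒜)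

/-- a cochain component is normalized if it vanishes on argument tuples containing an identity -/
def Normalized {p q : ℕ} (φ : Cpq 𝒜 M p q) : Prop :=
  ∀ (S T : 𝒰) (σ : Chain 𝒰 S T p) (X Y : A T) (a : Chain (A T) X Y q),
    a.HasId → φ S T σ X Y a = 0

/-- a total cochain is normalized -/
def NormalizedGS {n : ℕ} (φ : CGS 𝒜 M n) : Prop := ∀ pq, Normalized 𝒜 M (φ pq)

/-- a cochain component vanishes on right `kk`-degenerate simplices -/
def RightReduced (kk : ℕ) {p q : ℕ} (φ : Cpq 𝒜 M p q) : Prop :=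
  ∀ (S T : 𝒰) (σ : Chain 𝒰 S T p), σ.RightDeg kk →
    ∀ (X Y : A T) (a : Chain (A T) X Y q), φ S T σ X Y a = 0

/-- a total cochain vanishes on right `kk`-degenerate simplices -/
def RightReducedGS (kk : ℕ) {n : ℕ} (φ : CGS 𝒜 M n) : Prop :=
  ∀ pq, RightReduced 𝒜 M kk (φ pq)

/-- a cochain component is reduced: it vanishes on degenerate simplices -/
def Reduced {p q : ℕ} (φ : Cpq 𝒜 M p q) : Prop :=
  ∀ (S T : 𝒰) (σ : Chain 𝒰 S T p), σ.HasId →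
    ∀ (X Y : A T) (a : Chain (A T) X Y q), φ S T σ X Y a = 0

/-- a total cochain is reduced -/
def ReducedGS {n : ℕ} (φ : CGS 𝒜 M n) : Prop := ∀ pq, Reduced 𝒜 M (φ pq)

/-- membership in the filtration `F^j`: the components over simplices of dimension `≤ j`
are normalized -/
def NormalizedUpTo (j : ℕ) {n : ℕ} (φ : CGS 𝒜 M n) : Prop :=
  ∀ pq : {x : ℕ × ℕ // x.1 + x.2 = n}, pq.1.1 ≤ j → Normalized 𝒜 M (φ pq)

/-- The cohomology of the subcomplex of the Gerstenhaber–Schack complex cut out by the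
predicate `P` (as a bare quotient set: cocycles satisfying `P` modulo differentials of
cochains satisfying `P`). -/
def GSCohomology (P : ∀ n : ℕ, CGS 𝒜 M n → Prop) (n : ℕ) : Type _ :=
  Quot (fun (x y : {φ : CGS 𝒜 M n // P n φ ∧ dGS 𝒜 M n φ = 0}) =>
    ∃ (m : ℕ) (h : m + 1 = n) (ψ : CGS 𝒜 M m), P m ψ ∧ x.1 = y.1 + h ▸ dGS 𝒜 M m ψ)

/-- The statement that the inclusion of the subcomplex of the Gerstenhaber–Schack complex cut
out by `P'` into the one cut out by `P` is a quasi-isomorphism: the canonical map induced by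
the inclusion on cohomology is bijective in every degree. -/
def InclusionQuasiIso (P' P : ∀ n : ℕ, CGS 𝒜 M n → Prop) : Prop :=
  ∀ n : ℕ, ∃ F : GSCohomology 𝒜 M P' n → GSCohomology 𝒜 M P n,
    Function.Bijective F ∧
      ∀ (z : {φ : CGS 𝒜 M n // P' n φ ∧ dGS 𝒜 M n φ = 0})
        (w : {φ : CGS 𝒜 M n // P n φ ∧ dGS 𝒜 M n φ = 0}),
        z.1 = w.1 → F (Quot.mk _ z) = Quot.mk _ w

end CoreF
section SimpRedAux
open CategoryTheory

namespace SimpRed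

variable {C : Type u₂} [Category.{v₁} C]

/-- a morphism is an identity -/
def IsId {S T : C} (u : S ⟶ T) : Prop := ∃ h : S = T, HEq u (𝟙 S)

theorem isId_id (S : C) : IsId (𝟙 S) := ⟨rfl, HEq.rfl⟩

/-- insert an identity after the first `m` entries (or at the end if `m` exceeds the length) -/
def insL : ∀ {S T : C} {n : ℕ}, Chain C S T n → ℕ → Chain C S T (n + 1)
  | _, _, _, σ, 0 => .cons (𝟙 _) σ
  | _, _, _, .nil U, _ + 1 => .cons (𝟙 U) (.nil U)
  | _, _, _, .cons u ρ, m + 1 => .cons u (insL ρ m)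

/-- the entry with suffix count `c` (i.e. with `c - 1` entries after it) is an identity -/
def IdAt : ∀ {S T : C} {n : ℕ}, Chain C S T n → ℕ → Prop
  | _, _, _, .nil _, _ => False
  | _, _, _, .cons (n := n) u ρ, c => (n + 1 = c ∧ IsId u) ∨ IdAt ρ c

theorem idAt_pos : ∀ {S T : C} {n : ℕ} (σ : Chain C S T n) (c : ℕ), IdAt σ c → 1 ≤ c := by
  intro S T n σ
  induction σ with
  | nil => intro c h; exact h.elim
  | cons u ρ ih =>
    intro c h
    rcases h with ⟨h1, _⟩ | h
    · omega
    · exact ih c h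

theorem idAt_le : ∀ {S T : C} {n : ℕ} (σ : Chain C S T n) (c : ℕ), IdAt σ c → c ≤ n := by
  intro S T n σ
  induction σ with
  | nil => intro c h; exact h.elim
  | cons u ρ ih =>
    intro c h
    rcases h with ⟨h1, _⟩ | h
    · omega
    · exact Nat.le_succ_of_le (ih c h)

theorem rightDeg_of_idAt {S T : C} {n : ℕ} {σ : Chain C S T n} {c K : ℕ}
    (h : IdAt σ c) (hK : c ≤ K) : σ.RightDeg K := by
  induction σ with
  | nil => exact h.elim
  | cons u ρ ih =>
    rcases h with ⟨h1, hu⟩ | h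
    · exact Or.inl ⟨by omega, hu⟩
    · exact Or.inr (ih h)

theorem idAt_of_rightDeg : ∀ {S T : C} {n : ℕ} (σ : Chain C S T n) (K : ℕ),
    σ.RightDeg K → ∃ c, c ≤ K ∧ IdAt σ c := by
  intro S T n σ
  induction σ with
  | nil => intro K h; exact h.elim
  | cons u ρ ih =>
    intro K h
    rcases h with ⟨h1, hu⟩ | h
    · exact ⟨_, h1, Or.inl ⟨rfl, hu⟩⟩
    · obtain ⟨c, hc, hid⟩ := ih K h
      exact ⟨c, hc, Or.inr hid⟩

theorem idAt_tail {S Mid T : C} {n : ℕ} {u : S ⟶ Mid} {ρ : Chain C Mid T n} {c : ℕ}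
    (h : IdAt (Chain.cons u ρ) c) (hc : c ≤ n) : IdAt ρ c := by
  rcases h with ⟨h1, _⟩ | h
  · omega
  · exact h

theorem idAt_insL : ∀ {S T : C} {n : ℕ} (σ : Chain C S T n) (m c : ℕ),
    1 ≤ c → m + c = n + 1 → IdAt (insL σ m) c := by
  intro S T n σ
  induction σ with
  | nil =>
    intro m c hc hm
    have hm0 : m = 0 ∧ c = 1 := by omega
    obtain ⟨rfl, rfl⟩ := hm0
    exact Or.inl ⟨rfl, isId_id _⟩
  | cons u ρ ih =>
    intro m c hc hm
    cases m with
    | zero => exact Or.inl ⟨by omega, isId_id _⟩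
    | succ m => exact Or.inr (ih m c hc (by omega))

theorem idAt_insL_of_idAt : ∀ {S T : C} {n : ℕ} (σ : Chain C S T n) (m c : ℕ),
    IdAt σ c → m + c ≤ n → IdAt (insL σ m) c := by
  intro S T n σ
  induction σ with
  | nil => intro m c h _; exact h.elim
  | cons u ρ ih =>
    intro m c h hm
    cases m with
    | zero => exact Or.inr h
    | succ m =>
      rcases h with ⟨h1, _⟩ | h
      · omega
      · exact Or.inr (ih m c h (by omega))

theorem del_cons_succ {S Mid T : C} {n : ℕ} (u : S ⟶ Mid) (τ : Chain C Mid T (n + 2))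
    (i : ℕ) : (Chain.cons u τ).del (i + 1) = Chain.cons u (τ.del i) := by
  cases τ with
  | cons v ρ =>
    cases ρ with
    | cons w ρ' => rfl

theorem initLast_cons {S Mid T : C} {n : ℕ} (u : S ⟶ Mid) (τ : Chain C Mid T (n + 1)) :
    (Chain.cons u τ).initLast =
      ⟨τ.initLast.1, Chain.cons u τ.initLast.2.1, τ.initLast.2.2⟩ := by
  cases τ with
  | cons v ρ => rfl

theorem idAt_del_left : ∀ {n : ℕ} {S T : C} (σ : Chain C S T (n + 2)) (d c : ℕ),
    IdAt σ c → d + c ≤ n → IdAt (σ.del d) c := by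
  intro n
  induction n with
  | zero =>
    intro S T σ d c h hd
    have := idAt_pos σ c h
    omega
  | succ n ihn =>
    intro S T σ d c h hd
    match σ, h with
    | .cons u (.cons v (.cons w ρ)), h =>
      cases d with
      | zero =>
        rcases h with ⟨h1, _⟩ | ⟨h1, _⟩ | h
        · omega
        · omega
        · exact Or.inr h
      | succ d =>
        rcases h with ⟨h1, _⟩ | h
        · omega
        · rw [del_cons_succ]
          exact Or.inr (ihn _ d c h (by omega))

theorem idAt_del_right : ∀ {n : ℕ} {S T : C} (σ : Chain C S T (n + 2)) (d c : ℕ),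
    IdAt σ (c + 1) → d ≤ n → n + 1 < d + c → IdAt (σ.del d) c := by
  intro n
  induction n with
  | zero =>
    intro S T σ d c h hd hlt
    have := idAt_le σ (c + 1) h
    omega
  | succ n ihn =>
    intro S T σ d c h hd hlt
    match σ, h with
    | .cons u (.cons v (.cons w ρ)), h =>
      cases d with
      | zero =>
        have := idAt_le _ _ h
        omega
      | succ d =>
        rw [del_cons_succ]
        rcases h with ⟨h1, hu⟩ | h
        · exact Or.inl ⟨by omega, hu⟩
        · exact Or.inr (ihn _ d c h (by omega) (by omega))

theorem insL_zero {S T : C} {n : ℕ} (σ : Chain C S T n) :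
    insL σ 0 = Chain.cons (𝟙 S) σ := by
  cases σ <;> rfl

theorem del_zero {S M1 M2 T : C} {n : ℕ} (u : S ⟶ M1) (v : M1 ⟶ M2) (ρ : Chain C M2 T n) :
    (Chain.cons u (Chain.cons v ρ)).del 0 = Chain.cons (u ≫ v) ρ := by
  cases ρ <;> rfl

/-- the merge pair at `del`-index `i` contains an identity -/
def PairHasId : ∀ {S T : C} {n : ℕ}, Chain C S T (n + 2) → ℕ → Prop
  | _, _, _, .cons u (.cons v (.nil _)), _ => IsId u ∨ IsId v
  | _, _, _, .cons u (.cons v (.cons _ _)), 0 => IsId u ∨ IsId v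
  | _, _, _, .cons _ (.cons v (.cons w σ)), i + 1 => PairHasId (.cons v (.cons w σ)) i

theorem pairHasId_left : ∀ {n : ℕ} {S T : C} (σ : Chain C S T (n + 2)) (c d : ℕ),
    IdAt σ c → c + d = n + 1 → PairHasId σ d := by
  intro n
  induction n with
  | zero =>
    intro S T σ c d h hcd
    match σ with
    | .cons u (.cons v (.nil _)) =>
      have hc := idAt_pos _ _ h
      have : c = 1 := by omega
      subst this
      rcases h with ⟨h1, _⟩ | ⟨_, hv⟩ | h
      · omega
      · exact Or.inr hv
      · exact h.elim
  | succ n ihn =>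
    intro S T σ c d h hcd
    match σ with
    | .cons u (.cons v (.cons w ρ)) =>
      cases d with
      | zero =>
        rcases h with ⟨h1, _⟩ | ⟨h1, hv⟩ | h
        · omega
        · exact Or.inr hv
        · have := idAt_le _ _ h; omega
      | succ d =>
        rcases h with ⟨h1, _⟩ | h
        · omega
        · exact ihn _ c d h (by omega)

theorem pairHasId_right : ∀ {n : ℕ} {S T : C} (σ : Chain C S T (n + 2)) (c d : ℕ),
    IdAt σ c → c + d = n + 2 → 2 ≤ c → PairHasId σ d := by
  intro n
  induction n with
  | zero =>
    intro S T σ c d h hcd hc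
    match σ with
    | .cons u (.cons v (.nil _)) =>
      have := idAt_le _ _ h
      have : c = 2 := by omega
      subst this
      rcases h with ⟨_, hu⟩ | ⟨h1, _⟩ | h
      · exact Or.inl hu
      · omega
      · exact h.elim
  | succ n ihn =>
    intro S T σ c d h hcd hc
    match σ with
    | .cons u (.cons v (.cons w ρ)) =>
      cases d with
      | zero =>
        rcases h with ⟨_, hu⟩ | ⟨h1, _⟩ | h
        · exact Or.inl hu
        · omega
        · have := idAt_le _ _ h; omega
      | succ d =>
        rcases h with ⟨h1, _⟩ | h
        · omega
        · exact ihn _ c d h (by omega) hc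

theorem del_del_succ_of_idAt : ∀ {n : ℕ} {S T : C} (σ : Chain C S T (n + 2)) (c d : ℕ),
    IdAt σ (c + 2) → (c + 2) + d = n + 1 → σ.del d = σ.del (d + 1) := by
  intro n
  induction n with
  | zero => intro S T σ c d h hcd; omega
  | succ n ihn =>
    intro S T σ c d h hcd
    match σ with
    | .cons u (.cons v (.cons w ρ)) =>
      cases d with
      | zero =>
        rcases h with ⟨h1, _⟩ | ⟨h1, hv⟩ | h
        · omega
        · obtain ⟨he, hv⟩ := hv
          subst he
          have hv' := eq_of_heq hv
          subst hv'
          show _ = Chain.cons u ((Chain.cons (𝟙 _) (Chain.cons w ρ)).del 0)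
          rw [del_zero, del_zero, Category.comp_id, Category.id_comp]
        · have := idAt_le _ _ h; omega
      | succ d =>
        rcases h with ⟨h1, _⟩ | h
        · omega
        · rw [del_cons_succ, del_cons_succ, ihn _ c d h (by omega)]

theorem del_insL_left : ∀ {n : ℕ} {S T : C} (σ : Chain C S T (n + 1)) (m : ℕ),
    m + 1 ≤ n + 1 → (insL σ (m + 1)).del m = σ := by
  intro n
  induction n with
  | zero =>
    intro S T σ m hm
    have : m = 0 := by omega
    subst this
    match σ with
    | .cons u (.nil _) =>
      show (Chain.cons u (Chain.cons (𝟙 _) (Chain.nil _))).del 0 = _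
      rw [del_zero, Category.comp_id]
  | succ n ihn =>
    intro S T σ m hm
    match σ with
    | .cons u ρ =>
      cases m with
      | zero =>
        show (Chain.cons u (insL ρ 0)).del 0 = _
        rw [insL_zero, del_zero, Category.comp_id]
      | succ m =>
        show (Chain.cons u (insL ρ (m + 1))).del (m + 1) = _
        rw [del_cons_succ, ihn ρ m (by omega)]

theorem del_insL_right : ∀ {n : ℕ} {S T : C} (σ : Chain C S T (n + 1)) (m : ℕ),
    m ≤ n → (insL σ m).del m = σ := by
  intro n
  induction n with
  | zero =>
    intro S T σ m hm
    have : m = 0 := by omega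
    subst this
    match σ with
    | .cons u (.nil _) =>
      show (Chain.cons (𝟙 _) (Chain.cons u (Chain.nil _))).del 0 = _
      rw [del_zero, Category.id_comp]
  | succ n ihn =>
    intro S T σ m hm
    match σ with
    | .cons u ρ =>
      cases m with
      | zero =>
        show (Chain.cons (𝟙 _) (Chain.cons u ρ)).del 0 = _
        rw [del_zero, Category.id_comp]
      | succ m =>
        show (Chain.cons u (insL ρ m)).del (m + 1) = _
        rw [del_cons_succ, ihn ρ m (by omega)]

theorem insL_del_of_idAt : ∀ {n : ℕ} {S T : C} (σ : Chain C S T (n + 2)) (c d : ℕ),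
    IdAt σ (c + 2) → (c + 2) + d = n + 2 → insL (σ.del d) d = σ := by
  intro n
  induction n with
  | zero =>
    intro S T σ c d h hcd
    have : c = 0 ∧ d = 0 := by omega
    obtain ⟨rfl, rfl⟩ := this
    match σ, h with
    | .cons u (.cons v (.nil _)), h =>
      rcases h with ⟨_, hu⟩ | ⟨h1, _⟩ | h
      · obtain ⟨he, hu⟩ := hu
        subst he
        have hu' := eq_of_heq hu
        subst hu'
        rw [del_zero, Category.id_comp]
        rfl
      · omega
      · exact h.elim
  | succ n ihn =>
    intro S T σ c d h hcd
    match σ, h with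
    | .cons u (.cons v (.cons w ρ)), h =>
      cases d with
      | zero =>
        rcases h with ⟨_, hu⟩ | ⟨h1, _⟩ | h
        · obtain ⟨he, hu⟩ := hu
          subst he
          have hu' := eq_of_heq hu
          subst hu'
          rw [del_zero, Category.id_comp]
          rfl
        · omega
        · have := idAt_le _ _ h; omega
      | succ d =>
        rcases h with ⟨h1, _⟩ | h
        · omega
        · rw [del_cons_succ]
          show Chain.cons u (insL ((Chain.cons v (Chain.cons w ρ)).del d) d) = _
          rw [ihn _ c d h (by omega)]

theorem idAt_initLast : ∀ {n : ℕ} {S T : C} (σ : Chain C S T (n + 1)) (c : ℕ),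
    IdAt σ (c + 2) → IdAt σ.initLast.2.1 (c + 1) := by
  intro n
  induction n with
  | zero =>
    intro S T σ c h
    match σ, h with
    | .cons u (.nil _), h =>
      rcases h with ⟨h1, _⟩ | h
      · omega
      · exact h.elim
  | succ n ihn =>
    intro S T σ c h
    match σ, h with
    | .cons u ρ, h =>
      rw [initLast_cons]
      rcases h with ⟨h1, hu⟩ | h
      · exact Or.inl ⟨by omega, hu⟩
      · exact Or.inr (ihn ρ c h)

theorem isId_last : ∀ {n : ℕ} {S T : C} (σ : Chain C S T (n + 1)),
    IdAt σ 1 → IsId σ.initLast.2.2 := by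
  intro n
  induction n with
  | zero =>
    intro S T σ h
    match σ, h with
    | .cons u (.nil _), h =>
      rcases h with ⟨_, hu⟩ | h
      · exact hu
      · exact h.elim
  | succ n ihn =>
    intro S T σ h
    match σ, h with
    | .cons u ρ, h =>
      rw [initLast_cons]
      rcases h with ⟨h1, _⟩ | h
      · omega
      · exact ihn ρ h

theorem heq_cons {S Mid T T' : C} (hT : T = T') (u : S ⟶ Mid) {n : ℕ}
    {X : Chain C Mid T n} {Y : Chain C Mid T' n} (h : HEq X Y) :
    HEq (Chain.cons u X) (Chain.cons u Y) := by
  subst hT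
  rw [eq_of_heq h]

theorem del_last_heq : ∀ {n : ℕ} {S T : C} (σ : Chain C S T (n + 2)),
    IdAt σ 1 → HEq (σ.del n) σ.initLast.2.1 := by
  intro n
  induction n with
  | zero =>
    intro S T σ h
    match σ, h with
    | .cons u (.cons v (.nil _)), h =>
      rcases h with ⟨h1, _⟩ | ⟨_, hv⟩ | h
      · omega
      · obtain ⟨he, hv⟩ := hv
        subst he
        have hv' := eq_of_heq hv
        subst hv'
        rw [del_zero, Category.comp_id]
        rfl
      · exact h.elim
  | succ n ihn =>
    intro S T σ h
    match σ, h with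
    | .cons u ρ, h =>
      have h' : IdAt ρ 1 := by
        rcases h with ⟨h1, _⟩ | h
        · omega
        · exact h
      rw [del_cons_succ, initLast_cons]
      obtain ⟨hT, _⟩ := isId_last ρ h'
      exact heq_cons hT.symm u (ihn ρ h')

theorem insL_initLast_heq : ∀ {n : ℕ} {S T : C} (σ : Chain C S T (n + 1)),
    IdAt σ 1 → HEq (insL σ.initLast.2.1 n) σ := by
  intro n
  induction n with
  | zero =>
    intro S T σ h
    match σ, h with
    | .cons u (.nil _), h =>
      rcases h with ⟨_, hu⟩ | h
      · obtain ⟨he, hu⟩ := hu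
        subst he
        have hu' := eq_of_heq hu
        subst hu'
        rfl
      · exact h.elim
  | succ n ihn =>
    intro S T σ h
    match σ, h with
    | .cons u ρ, h =>
      have h' : IdAt ρ 1 := by
        rcases h with ⟨h1, _⟩ | h
        · omega
        · exact h
      rw [initLast_cons]
      obtain ⟨hT, _⟩ := isId_last ρ h'
      show HEq (Chain.cons u (insL ρ.initLast.2.1 n)) _
      exact heq_cons hT u (ihn ρ h')

theorem initLast_insL_top : ∀ {n : ℕ} {S T : C} (σ : Chain C S T n),
    (insL σ n).initLast = ⟨T, σ, 𝟙 T⟩ := by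
  intro n
  induction n with
  | zero =>
    intro S T σ
    match σ with
    | .nil U => rfl
  | succ n ihn =>
    intro S T σ
    match σ with
    | .cons u ρ =>
      show (Chain.cons u (insL ρ n)).initLast = _
      rw [initLast_cons, ihn ρ]

theorem ins_del_last : ∀ {n : ℕ} {S T : C} (σ : Chain C S T (n + 2)),
    IdAt σ 1 → insL (σ.del n) (n + 1) = σ := by
  intro n
  induction n with
  | zero =>
    intro S T σ h
    match σ, h with
    | .cons u (.cons v (.nil _)), h =>
      rcases h with ⟨h1, _⟩ | ⟨_, hv⟩ | h
      · omega
      · obtain ⟨he, hv⟩ := hv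
        subst he
        have hv' := eq_of_heq hv
        subst hv'
        rw [del_zero]
        show Chain.cons (u ≫ 𝟙 _) (Chain.cons (𝟙 _) (Chain.nil _)) = _
        rw [Category.comp_id]
      · exact h.elim
  | succ n ihn =>
    intro S T σ h
    match σ, h with
    | .cons u τ, h =>
      have h' : IdAt τ 1 := by
        rcases h with ⟨h1, _⟩ | h
        · omega
        · exact h
      rw [del_cons_succ]
      show Chain.cons u (insL (τ.del n) (n + 1)) = _
      rw [ihn τ h']

theorem heq_comp {D : Type w₁} [Category.{w₂} D] {X Y Z X' Y' Z' : D}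
    (hX : X = X') (hY : Y = Y') (hZ : Z = Z') {f : X ⟶ Y} {f' : X' ⟶ Y'}
    {g : Y ⟶ Z} {g' : Y' ⟶ Z'} (hf : HEq f f') (hg : HEq g g') : HEq (f ≫ g) (f' ≫ g') := by
  subst hX hY hZ
  rw [eq_of_heq hf, eq_of_heq hg]

theorem heq_eqToHom {D : Type w₁} [Category.{w₂} D] {X Y X' Y' : D}
    (hX : X = X') (hY : Y = Y') (h : X = Y) (h' : X' = Y') :
    HEq (eqToHom h) (eqToHom h') := by
  subst hX hY
  rfl

theorem heq_map {D : Type u₂} [Category.{v₁} D] {D' : Type w₁} [Category.{w₂} D']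
    (F : D ⥤ D') {X Y X' Y' : D} (hX : X = X') (hY : Y = Y')
    {f : X ⟶ Y} {f' : X' ⟶ Y'} (hf : HEq f f') : HEq (F.map f) (F.map f') := by
  subst hX hY
  rw [eq_of_heq hf]

section Prestacks

variable {k : Type u₁} [CommRing k] {𝒰 : Type u₂} [Category.{v₁} 𝒰]
  {A : 𝒰 → Type w₁} [∀ U, Category.{w₂} (A U)] [∀ U, Preadditive (A U)]
  [∀ U, Linear k (A U)]

theorem star_insL (𝒜 : Prestack k 𝒰 A) :
    ∀ {S T : 𝒰} {n : ℕ} (σ : Chain 𝒰 S T n) (m : ℕ),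
      (insL σ m).star 𝒜 = σ.star 𝒜 := by
  intro S T n σ
  induction σ with
  | nil =>
    intro m
    cases m with
    | zero =>
      show Chain.star 𝒜 (Chain.nil _) ⋙ 𝒜.res (𝟙 _) = _
      rw [𝒜.res_id]
      exact Functor.comp_id _
    | succ m =>
      show Chain.star 𝒜 (Chain.nil _) ⋙ 𝒜.res (𝟙 _) = _
      rw [𝒜.res_id]
      exact Functor.comp_id _
  | cons u ρ ih =>
    intro m
    cases m with
    | zero =>
      rw [insL_zero]
      show (Chain.cons u ρ).star 𝒜 ⋙ 𝒜.res (𝟙 _) = _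
      rw [𝒜.res_id]
      exact Functor.comp_id _
    | succ m =>
      show (insL ρ m).star 𝒜 ⋙ 𝒜.res u = _
      rw [ih m]
      rfl

theorem comp_insL : ∀ {S T : 𝒰} {n : ℕ} (σ : Chain 𝒰 S T n) (m : ℕ),
    (insL σ m).comp = σ.comp := by
  intro S T n σ
  induction σ with
  | nil =>
    intro m
    cases m <;> rfl
  | cons u ρ ih =>
    intro m
    cases m with
    | zero =>
      rw [insL_zero, Chain.comp_cons', Category.id_comp]
    | succ m =>
      show (Chain.cons u (insL ρ m)).comp = _
      rw [Chain.comp_cons', ih m, Chain.comp_cons']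

theorem ast_insL (𝒜 : Prestack k 𝒰 A) {S T : 𝒰} {n : ℕ} (σ : Chain 𝒰 S T n) (m : ℕ) :
    (insL σ m).ast 𝒜 = σ.ast 𝒜 := by
  rw [← Chain.res_comp_eq_ast, ← Chain.res_comp_eq_ast, comp_insL]

theorem del_insL_comm : ∀ {d : ℕ} {n : ℕ} {S T : 𝒰} (σ : Chain 𝒰 S T (n + 2)) (m : ℕ),
    d + 1 ≤ m → m + 1 ≤ n + 2 → (insL σ (m + 1)).del d = insL (σ.del d) m := by
  intro d
  induction d with
  | zero =>
    intro n S T σ m hd hm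
    cases m with
    | zero => omega
    | succ m =>
      match σ with
      | .cons u (.cons v ρ) =>
        show (Chain.cons u (Chain.cons v (insL ρ m))).del 0 = _
        rw [del_zero, del_zero]
        rfl
  | succ d ihd =>
    intro n S T σ m hd hm
    cases m with
    | zero => omega
    | succ m =>
      cases n with
      | zero => omega
      | succ n =>
        match σ with
        | .cons u τ =>
          show (Chain.cons u (insL τ (m + 1))).del (d + 1) = _
          rw [del_cons_succ, del_cons_succ, ihd τ m (by omega) (by omega)]
          rfl

theorem heq_eps_zero_app (𝒜 : Prestack k 𝒰 A) {S M1 M2 T : 𝒰} {n : ℕ} (u : S ⟶ M1)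
    (v : M1 ⟶ M2) (ρ : Chain 𝒰 M2 T n) (X : A T) :
    HEq (((Chain.cons u (Chain.cons v ρ)).eps 𝒜 0).app X)
      ((𝒜.twist u v).hom.app ((ρ.star 𝒜).obj X)) := by
  cases ρ <;> exact HEq.rfl

theorem heq_eps_succ_app (𝒜 : Prestack k 𝒰 A) {S Mid T : 𝒰} {n : ℕ} (u : S ⟶ Mid)
    (τ : Chain 𝒰 Mid T (n + 2)) (d : ℕ) (X : A T) :
    HEq (((Chain.cons u τ).eps 𝒜 (d + 1)).app X) ((𝒜.res u).map ((τ.eps 𝒜 d).app X)) := by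
  match τ with
  | .cons v (.cons w ρ') => exact HEq.rfl

theorem heq_eps_insL (𝒜 : Prestack k 𝒰 A) :
    ∀ {d : ℕ} {n : ℕ} {S T : 𝒰} (σ : Chain 𝒰 S T (n + 2)) (m : ℕ),
      d + 1 ≤ m → m + 1 ≤ n + 2 → ∀ X : A T,
        HEq (((insL σ (m + 1)).eps 𝒜 d).app X) ((σ.eps 𝒜 d).app X) := by
  intro d
  induction d with
  | zero =>
    intro n S T σ m hd hm X
    cases m with
    | zero => omega
    | succ m =>
      match σ with
      | .cons u (.cons v ρ) =>
        refine HEq.trans (HEq.trans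
          (heq_eps_zero_app 𝒜 u v (insL ρ m) X
            (T := _)) ?_) (heq_eps_zero_app 𝒜 u v ρ X).symm
        rw [star_insL]
  | succ d ihd =>
    intro n S T σ m hd hm X
    cases m with
    | zero => omega
    | succ m =>
      cases n with
      | zero => omega
      | succ n =>
        match σ with
        | .cons u τ =>
          refine HEq.trans (HEq.trans (heq_eps_succ_app 𝒜 u (insL τ (m + 1)) d X) ?_)
            (heq_eps_succ_app 𝒜 u τ d X).symm
          exact heq_map (𝒜.res u)
            (by rw [star_insL])
            (by rw [del_insL_comm τ m (by omega) (by omega), star_insL])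
            (ihd τ m (by omega) (by omega) X)

theorem eps_eqToHom_of_pairHasId (𝒜 : Prestack k 𝒰 A) :
    ∀ {n : ℕ} {S T : 𝒰} (σ : Chain 𝒰 S T (n + 2)) (d : ℕ), PairHasId σ d →
      ∃ h : (σ.del d).star 𝒜 = σ.star 𝒜, ∀ X : A T,
        (σ.eps 𝒜 d).app X = eqToHom (congrArg (fun F => F.obj X) h.symm) := by
  intro n
  induction n with
  | zero =>
    intro S T σ d hp
    match σ with
    | .cons u (.cons v (.nil _)) =>
      rcases hp with hu | hv
      · obtain ⟨he, hu⟩ := hu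
        subst he
        have hu' := eq_of_heq hu
        subst hu'
        refine ⟨?_, ?_⟩
        · show Chain.star 𝒜 (Chain.nil _) ⋙ 𝒜.res (𝟙 S ≫ v) =
            (Chain.star 𝒜 (Chain.nil _) ⋙ 𝒜.res v) ⋙ 𝒜.res (𝟙 S)
          rw [Category.id_comp, 𝒜.res_id]
          exact (Functor.comp_id _).symm
        · intro X
          show (𝒜.twist (𝟙 S) v).hom.app X = _
          rw [𝒜.twist_id_left]
          simp
          rfl
      · obtain ⟨he, hv⟩ := hv
        subst he
        have hv' := eq_of_heq hv
        subst hv'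
        refine ⟨?_, ?_⟩
        · show Chain.star 𝒜 (Chain.nil _) ⋙ 𝒜.res (u ≫ 𝟙 _) =
            (Chain.star 𝒜 (Chain.nil _) ⋙ 𝒜.res (𝟙 _)) ⋙ 𝒜.res u
          rw [Category.comp_id, 𝒜.res_id]
          rfl
        · intro X
          show (𝒜.twist u (𝟙 _)).hom.app X = _
          rw [𝒜.twist_id_right]
          simp
          rfl
  | succ n ihn =>
    intro S T σ d hp
    match σ, d, hp with
    | .cons u (.cons v (.cons w ρ)), 0, hp =>
      have hF : 𝒜.res v ⋙ 𝒜.res u = 𝒜.res (u ≫ v) := by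
        rcases hp with hu | hv
        · obtain ⟨he, hu⟩ := hu
          subst he
          have hu' := eq_of_heq hu
          subst hu'
          rw [𝒜.res_id, Category.id_comp]
          exact Functor.comp_id _
        · obtain ⟨he, hv⟩ := hv
          subst he
          have hv' := eq_of_heq hv
          subst hv'
          rw [𝒜.res_id, Category.comp_id]
          exact Functor.id_comp _
      have hT : (𝒜.twist u v).hom = eqToHom hF := by
        rcases hp with hu | hv
        · obtain ⟨he, hu⟩ := hu
          subst he
          have hu' := eq_of_heq hu
          subst hu'
          rw [𝒜.twist_id_left]
          simp
        · obtain ⟨he, hv⟩ := hv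
          subst he
          have hv' := eq_of_heq hv
          subst hv'
          rw [𝒜.twist_id_right]
          simp
      refine ⟨?_, ?_⟩
      · show (Chain.cons w ρ).star 𝒜 ⋙ 𝒜.res (u ≫ v) =
          (((Chain.cons w ρ).star 𝒜 ⋙ 𝒜.res v) ⋙ 𝒜.res u)
        rw [Functor.assoc, hF]
      · intro X
        show (CategoryTheory.Functor.whiskerLeft ((Chain.cons w ρ).star 𝒜)
          (𝒜.twist u v).hom).app X = _
        rw [CategoryTheory.Functor.whiskerLeft_app, hT, eqToHom_app]
        rfl
    | .cons u (.cons v (.cons w ρ)), d + 1, hp =>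
      obtain ⟨h, happ⟩ := ihn (Chain.cons v (Chain.cons w ρ)) d hp
      refine ⟨?_, ?_⟩
      · rw [del_cons_succ]
        show ((Chain.cons v (Chain.cons w ρ)).del d).star 𝒜 ⋙ 𝒜.res u = _
        rw [h]
        rfl
      · intro X
        show (𝒜.res u).map (((Chain.cons v (Chain.cons w ρ)).eps 𝒜 d).app X) = _
        rw [happ X, eqToHom_map]
        rfl

section Bimod

variable {𝒜 : Prestack k 𝒰 A} {M : Bimodule 𝒜}

theorem castV_self {U : 𝒰} {X Y : A U} (h₁ : X = X) (h₂ : Y = Y) (x : M.val U X Y) :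
    M.castV h₁ h₂ x = x := rfl

theorem castV_castV {U : 𝒰} {X X' X'' Y Y' Y'' : A U} (h₁ : X = X') (h₂ : Y = Y')
    (g₁ : X' = X'') (g₂ : Y' = Y'') (x : M.val U X Y) :
    M.castV g₁ g₂ (M.castV h₁ h₂ x) = M.castV (h₁.trans g₁) (h₂.trans g₂) x := by
  subst h₁ h₂ g₁ g₂
  rfl

theorem castV_zero {U : 𝒰} {X X' Y Y' : A U} (h₁ : X = X') (h₂ : Y = Y') :
    M.castV h₁ h₂ (0 : M.val U X Y) = 0 := by
  subst h₁ h₂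
  rfl

theorem castV_add {U : 𝒰} {X X' Y Y' : A U} (h₁ : X = X') (h₂ : Y = Y')
    (x y : M.val U X Y) : M.castV h₁ h₂ (x + y) = M.castV h₁ h₂ x + M.castV h₁ h₂ y := by
  subst h₁ h₂
  rfl

theorem castV_zsmul {U : 𝒰} {X X' Y Y' : A U} (h₁ : X = X') (h₂ : Y = Y') (n : ℤ)
    (x : M.val U X Y) : M.castV h₁ h₂ (n • x) = n • M.castV h₁ h₂ x := by
  subst h₁ h₂
  rfl

theorem castV_sub {U : 𝒰} {X X' Y Y' : A U} (h₁ : X = X') (h₂ : Y = Y')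
    (x y : M.val U X Y) : M.castV h₁ h₂ (x - y) = M.castV h₁ h₂ x - M.castV h₁ h₂ y := by
  subst h₁ h₂
  rfl

theorem actL_zero {U : 𝒰} {X Y Y' : A U} (g : Y ⟶ Y') :
    M.actL g (0 : M.val U X Y) = 0 :=
  (AddMonoidHom.mk' (M.actL g) (M.actL_add g)).map_zero

theorem actL_zsmul {U : 𝒰} {X Y Y' : A U} (g : Y ⟶ Y') (n : ℤ) (x : M.val U X Y) :
    M.actL g (n • x) = n • M.actL g x :=
  map_zsmul (AddMonoidHom.mk' (M.actL g) (M.actL_add g)) n x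

theorem actR_zero {U : 𝒰} {X X' Y : A U} (f : X' ⟶ X) :
    M.actR (0 : M.val U X Y) f = 0 :=
  (AddMonoidHom.mk' (fun x => M.actR x f) (fun a b => M.actR_add f a b)).map_zero

theorem actR_zsmul {U : 𝒰} {X X' Y : A U} (f : X' ⟶ X) (n : ℤ) (x : M.val U X Y) :
    M.actR (n • x) f = n • M.actR x f :=
  map_zsmul (AddMonoidHom.mk' (fun x => M.actR x f) (fun a b => M.actR_add f a b)) n x

theorem rst_zero {V U : 𝒰} (u : V ⟶ U) {X Y : A U} :
    M.rst u (0 : M.val U X Y) = 0 :=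
  (AddMonoidHom.mk' (M.rst u) (M.rst_add u)).map_zero

theorem rst_zsmul {V U : 𝒰} (u : V ⟶ U) {X Y : A U} (n : ℤ) (x : M.val U X Y) :
    M.rst u (n • x) = n • M.rst u x :=
  map_zsmul (AddMonoidHom.mk' (M.rst u) (M.rst_add u)) n x

theorem actL_eqToHom {U : 𝒰} {X Y Y' : A U} (h : Y = Y') (x : M.val U X Y) :
    M.actL (eqToHom h) x = M.castV rfl h x := by
  subst h
  rw [eqToHom_refl, M.actL_id]
  rfl

theorem actR_eqToHom {U : 𝒰} {X X' Y : A U} (h : X' = X) (x : M.val U X Y) :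
    M.actR x (eqToHom h) = M.castV h.symm rfl x := by
  subst h
  rw [eqToHom_refl, M.actR_id]
  rfl

theorem heq_castV {U : 𝒰} {X X' Y Y' : A U} (h₁ : X = X') (h₂ : Y = Y') (x : M.val U X Y) :
    HEq (M.castV h₁ h₂ x) x := by
  subst h₁ h₂
  rfl

theorem heq_actL {U : 𝒰} {X₁ Y₁ Z₁ X₂ Y₂ Z₂ : A U} (hX : X₁ = X₂) (hY : Y₁ = Y₂)
    (hZ : Z₁ = Z₂) {g₁ : Y₁ ⟶ Z₁} {g₂ : Y₂ ⟶ Z₂} (hg : HEq g₁ g₂)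
    {x₁ : M.val U X₁ Y₁} {x₂ : M.val U X₂ Y₂} (hx : HEq x₁ x₂) :
    HEq (M.actL g₁ x₁) (M.actL g₂ x₂) := by
  subst hX hY hZ
  rw [eq_of_heq hg, eq_of_heq hx]

theorem heq_actR {U : 𝒰} {X₁ X₁' Y₁ X₂ X₂' Y₂ : A U} (hX : X₁ = X₂) (hX' : X₁' = X₂')
    (hY : Y₁ = Y₂) {f₁ : X₁' ⟶ X₁} {f₂ : X₂' ⟶ X₂} (hf : HEq f₁ f₂)
    {x₁ : M.val U X₁ Y₁} {x₂ : M.val U X₂ Y₂} (hx : HEq x₁ x₂) :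
    HEq (M.actR x₁ f₁) (M.actR x₂ f₂) := by
  subst hX hX' hY
  rw [eq_of_heq hf, eq_of_heq hx]

theorem heq_rst {V U : 𝒰} (u : V ⟶ U) {X₁ Y₁ X₂ Y₂ : A U} (hX : X₁ = X₂) (hY : Y₁ = Y₂)
    {x₁ : M.val U X₁ Y₁} {x₂ : M.val U X₂ Y₂} (hx : HEq x₁ x₂) :
    HEq (M.rst u x₁) (M.rst u x₂) := by
  subst hX hY
  rw [eq_of_heq hx]

theorem heq_zsmul {U : 𝒰} {X₁ Y₁ X₂ Y₂ : A U} (hX : X₁ = X₂) (hY : Y₁ = Y₂) (n : ℤ)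
    {x₁ : M.val U X₁ Y₁} {x₂ : M.val U X₂ Y₂} (hx : HEq x₁ x₂) :
    HEq (n • x₁) (n • x₂) := by
  subst hX hY
  rw [eq_of_heq hx]

theorem cpq_congr_chain {P Q : ℕ} (ξ : Cpq 𝒜 M P Q) {S T : 𝒰} {σ σ' : Chain 𝒰 S T P}
    (h : σ = σ') (X Y : A T) (a : Chain (A T) X Y Q) :
    ξ S T σ X Y a =
      M.castV (show (σ'.star 𝒜).obj X = (σ.star 𝒜).obj X by rw [h])
        (show (σ'.ast 𝒜).obj Y = (σ.ast 𝒜).obj Y by rw [h])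
        (ξ S T σ' X Y a) := by
  subst h
  rfl

theorem heq_cpq {P Q : ℕ} (ξ : Cpq 𝒜 M P Q) {S T T' : 𝒰} (hT : T = T')
    {σ : Chain 𝒰 S T P} {σ' : Chain 𝒰 S T' P} (hσ : HEq σ σ')
    {X Y : A T} {X' Y' : A T'} (hX : HEq X X') (hY : HEq Y Y')
    {a : Chain (A T) X Y Q} {a' : Chain (A T') X' Y' Q} (ha : HEq a a') :
    HEq (ξ S T σ X Y a) (ξ S T' σ' X' Y' a') := by
  subst hT
  have h1 := eq_of_heq hσ
  have h2 := eq_of_heq hX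
  have h3 := eq_of_heq hY
  subst h1 h2 h3
  rw [eq_of_heq ha]

theorem mapC_id {T : 𝒰} : ∀ {X Y : A T} {Q : ℕ} (a : Chain (A T) X Y Q),
    a.mapC (𝟭 (A T)) = a := by
  intro X Y Q a
  induction a with
  | nil => rfl
  | cons f a' ih =>
    show Chain.cons ((𝟭 (A T)).map f) (Chain.mapC (𝟭 (A T)) a') = _
    rw [ih]
    rfl

theorem heq_mapC {T : 𝒰} {V : 𝒰} {F G : A T ⥤ A V} (h : F = G) {X Y : A T} {Q : ℕ}
    (a : Chain (A T) X Y Q) : HEq (a.mapC F) (a.mapC G) := by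
  subst h
  rfl

end Bimod

section Terms

variable {𝒜 : Prestack k 𝒰 A} {M : Bimodule 𝒜}

/-- the `i = 0` term of `dSimp` -/
def T0 {p q : ℕ} (ξ : Cpq 𝒜 M p q) {S Mid T : 𝒰} (u : S ⟶ Mid) (σ' : Chain 𝒰 Mid T p)
    (X Y : A T) (a : Chain (A T) X Y q) :
    M.val S (((Chain.cons u σ').star 𝒜).obj X) (((Chain.cons u σ').ast 𝒜).obj Y) :=
  M.castV
    (rfl :
      (𝒜.res u).obj ((σ'.star 𝒜).obj X) = ((Chain.cons u σ').star 𝒜).obj X)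
    ((congrArg (fun f => (𝒜.res f).obj Y) (Chain.comp_cons' u σ').symm :
      (𝒜.res (u ≫ σ'.comp)).obj Y = ((Chain.cons u σ').ast 𝒜).obj Y))
    (M.actL ((𝒜.twist u σ'.comp).hom.app Y)
      (M.castV rfl
        ((congrArg (fun F => (𝒜.res u).obj (F.obj Y))
            (Chain.res_comp_eq_ast 𝒜 σ').symm :
          (𝒜.res u).obj ((σ'.ast 𝒜).obj Y) = (𝒜.res σ'.comp ⋙ 𝒜.res u).obj Y))
        (M.rst u (ξ _ T σ' X Y a))))

/-- the `i = j+1` terms of `dSimp` -/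
def TI {p q : ℕ} (ξ : Cpq 𝒜 M p q) {S Mid T : 𝒰} (u : S ⟶ Mid) (σ' : Chain 𝒰 Mid T p)
    (X Y : A T) (a : Chain (A T) X Y q) (j : Fin p) :
    M.val S (((Chain.cons u σ').star 𝒜).obj X) (((Chain.cons u σ').ast 𝒜).obj Y) :=
  let h1 : p + 1 = p - 1 + 2 := by have := j.isLt; omega
  let h2 : p - 1 + 1 = p := by have := j.isLt; omega
  let σc := Chain.cast' h1 (Chain.cons u σ')
  let σd := Chain.cast' h2 (σc.del j.val)
  ((-1 : ℤ) ^ (j.val + 1)) •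
    (M.castV
      ((congrArg (fun F => F.obj X) (Chain.star_cast' 𝒜 h1 (Chain.cons u σ')) :
        (σc.star 𝒜).obj X = ((Chain.cons u σ').star 𝒜).obj X))
      ((congrArg (fun F => F.obj Y)
          (show σd.ast 𝒜 = (Chain.cons u σ').ast 𝒜 by
            rw [Chain.ast_cast', Chain.ast_del, Chain.ast_cast']) :
        (σd.ast 𝒜).obj Y = ((Chain.cons u σ').ast 𝒜).obj Y))
      (M.actR (ξ S T σd X Y a)
        ((σc.eps 𝒜 j.val).app X ≫
          eqToHom ((congrArg (fun F => F.obj X)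
            (Chain.star_cast' 𝒜 h2 (σc.del j.val))).symm))))

/-- the `i = p+1` term of `dSimp` -/
def T2 {p q : ℕ} (ξ : Cpq 𝒜 M p q) {S Mid T : 𝒰} (u : S ⟶ Mid) (σ' : Chain 𝒰 Mid T p)
    (X Y : A T) (a : Chain (A T) X Y q) :
    M.val S (((Chain.cons u σ').star 𝒜).obj X) (((Chain.cons u σ').ast 𝒜).obj Y) :=
  ((-1 : ℤ) ^ (p + 1)) •
    (M.castV
      ((Functor.congr_obj (Chain.star_init 𝒜 (Chain.cons u σ')) X).symm :
        ((𝒜.res (Chain.cons u σ').initLast.2.2 ⋙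
          (Chain.cons u σ').initLast.2.1.star 𝒜).obj X) =
          ((Chain.cons u σ').star 𝒜).obj X)
      ((congrArg (fun f => (𝒜.res f).obj Y) (Chain.comp_init (Chain.cons u σ')) :
        (𝒜.res ((Chain.cons u σ').initLast.2.1.comp ≫
          (Chain.cons u σ').initLast.2.2)).obj Y = ((Chain.cons u σ').ast 𝒜).obj Y))
      (M.actL
        ((𝒜.twist (Chain.cons u σ').initLast.2.1.comp
            (Chain.cons u σ').initLast.2.2).hom.app Y)
        (M.castV rfl
          ((congrArg (fun F =>
              F.obj ((𝒜.res (Chain.cons u σ').initLast.2.2).obj Y))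
              (Chain.res_comp_eq_ast 𝒜 (Chain.cons u σ').initLast.2.1).symm :
            ((Chain.cons u σ').initLast.2.1.ast 𝒜).obj
                ((𝒜.res (Chain.cons u σ').initLast.2.2).obj Y) =
              (𝒜.res (Chain.cons u σ').initLast.2.2 ⋙
                𝒜.res (Chain.cons u σ').initLast.2.1.comp).obj Y))
          (ξ S _ (Chain.cons u σ').initLast.2.1 _ _
            (a.mapC (𝒜.res (Chain.cons u σ').initLast.2.2))))))

theorem dSimp_cons {p q : ℕ} (ξ : Cpq 𝒜 M p q) {S Mid T : 𝒰} (u : S ⟶ Mid)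
    (σ' : Chain 𝒰 Mid T p) (X Y : A T) (a : Chain (A T) X Y q) :
    dSimp 𝒜 M ξ S T (Chain.cons u σ') X Y a =
      T0 ξ u σ' X Y a + (∑ j : Fin p, TI ξ u σ' X Y a j) + T2 ξ u σ' X Y a := rfl

/-- the homotopy cochain: `ψ^τ := (-1)^{p-kk+1} φ^{s(τ)}` where `s` inserts an identity
with `kk` entries to its right -/
def psi (𝒜 : Prestack k 𝒰 A) (M : Bimodule 𝒜) {q : ℕ} (kk p : ℕ)
    (φ : Cpq 𝒜 M (p + 1) q) : Cpq 𝒜 M p q :=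
  fun S T τ X Y a =>
    ((-1 : ℤ) ^ (p - kk + 1)) •
      M.castV (congrArg (fun F => F.obj X) (star_insL 𝒜 τ (p - kk)))
        (congrArg (fun F => F.obj Y) (ast_insL 𝒜 τ (p - kk)))
        (φ S T (insL τ (p - kk)) X Y a)

theorem TI_eq {p' q : ℕ} (ξ : Cpq 𝒜 M (p' + 1) q) {S Mid T : 𝒰} (u : S ⟶ Mid)
    (σ' : Chain 𝒰 Mid T (p' + 1)) (X Y : A T) (a : Chain (A T) X Y q) (j : Fin (p' + 1)) :
    TI ξ u σ' X Y a j =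
      ((-1 : ℤ) ^ (j.val + 1)) •
        (M.castV rfl
          (show (((Chain.cons u σ').del j.val).ast 𝒜).obj Y =
              ((Chain.cons u σ').ast 𝒜).obj Y by rw [Chain.ast_del])
          (M.actR (ξ S T ((Chain.cons u σ').del j.val) X Y a)
            (((Chain.cons u σ').eps 𝒜 j.val).app X))) := by
  have : TI ξ u σ' X Y a j =
      ((-1 : ℤ) ^ (j.val + 1)) •
        (M.castV rfl
          (show (((Chain.cons u σ').del j.val).ast 𝒜).obj Y =
              ((Chain.cons u σ').ast 𝒜).obj Y by rw [Chain.ast_del])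
          (M.actR (ξ S T ((Chain.cons u σ').del j.val) X Y a)
            (((Chain.cons u σ').eps 𝒜 j.val).app X ≫ eqToHom rfl))) := rfl
  rw [this, eqToHom_refl, Category.comp_id]

theorem smul_pow_succ_cancel {V : Type w₂} [AddCommGroup V] (e : ℕ) (v : V) :
    ((-1 : ℤ) ^ (e + 1)) • v + ((-1 : ℤ) ^ (e + 1 + 1)) • v = 0 := by
  have h : ((-1 : ℤ) ^ (e + 1 + 1)) = -((-1 : ℤ) ^ (e + 1)) := by ring
  rw [h, neg_smul]
  exact add_neg_cancel _

theorem TI_pairHasId {p' q : ℕ} (ξ : Cpq 𝒜 M (p' + 1) q) {S Mid T : 𝒰} (u : S ⟶ Mid)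
    (σ' : Chain 𝒰 Mid T (p' + 1)) (X Y : A T) (a : Chain (A T) X Y q) (j : Fin (p' + 1))
    (jv : ℕ) (hjv : j.val = jv)
    (hp : PairHasId (Chain.cons u σ') jv)
    (e₁ : (((Chain.cons u σ').del jv).star 𝒜).obj X = ((Chain.cons u σ').star 𝒜).obj X)
    (e₂ : (((Chain.cons u σ').del jv).ast 𝒜).obj Y = ((Chain.cons u σ').ast 𝒜).obj Y) :
    TI ξ u σ' X Y a j =
      ((-1 : ℤ) ^ (jv + 1)) •
        M.castV e₁ e₂ (ξ S T ((Chain.cons u σ').del jv) X Y a) := by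
  subst hjv
  obtain ⟨h, happ⟩ := eps_eqToHom_of_pairHasId 𝒜 (Chain.cons u σ') j.val hp
  rw [TI_eq, happ X, actR_eqToHom, castV_castV]

theorem T0_zero {p q : ℕ} (ξ : Cpq 𝒜 M p q) {S Mid T : 𝒰} (u : S ⟶ Mid)
    (σ' : Chain 𝒰 Mid T p) (X Y : A T) (a : Chain (A T) X Y q)
    (hz : ξ Mid T σ' X Y a = 0) : T0 ξ u σ' X Y a = 0 := by
  unfold T0
  rw [hz, rst_zero, castV_zero, actL_zero]
  exact castV_zero _ _

theorem TI_zero {p' q : ℕ} (ξ : Cpq 𝒜 M (p' + 1) q) {S Mid T : 𝒰} (u : S ⟶ Mid)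
    (σ' : Chain 𝒰 Mid T (p' + 1)) (X Y : A T) (a : Chain (A T) X Y q) (j : Fin (p' + 1))
    (hz : ξ S T ((Chain.cons u σ').del j.val) X Y a = 0) : TI ξ u σ' X Y a j = 0 := by
  rw [TI_eq, hz, actR_zero, castV_zero, smul_zero]

theorem T2_zero {p q : ℕ} (ξ : Cpq 𝒜 M p q) {S Mid T : 𝒰} (u : S ⟶ Mid)
    (σ' : Chain 𝒰 Mid T p) (X Y : A T) (a : Chain (A T) X Y q)
    (hz : ξ S _ (Chain.cons u σ').initLast.2.1 _ _
      (a.mapC (𝒜.res (Chain.cons u σ').initLast.2.2)) = 0) : T2 ξ u σ' X Y a = 0 := by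
  unfold T2
  rw [hz, castV_zero, actL_zero, castV_zero, smul_zero]
  rfl

theorem twist_isId_app {V W T : 𝒰} (f : V ⟶ W) (lst : W ⟶ T) (h : IsId lst) (Y : A T) :
    ∃ hobj : (𝒜.res lst ⋙ 𝒜.res f).obj Y = (𝒜.res (f ≫ lst)).obj Y,
      (𝒜.twist f lst).hom.app Y = eqToHom hobj := by
  obtain ⟨hW, hl⟩ := h
  subst hW
  have hl' := eq_of_heq hl
  subst hl'
  refine ⟨?_, ?_⟩
  · rw [Category.comp_id, 𝒜.res_id]
    rfl
  · rw [𝒜.twist_id_right]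
    simp

theorem heq_T2core {p'' q : ℕ} (ξ : Cpq 𝒜 M p'' q) {S T W : 𝒰} (pre : Chain 𝒰 S W p'')
    (lst : W ⟶ T) (hlst : IsId lst) (δ : Chain 𝒰 S T p'') (hδ : HEq δ pre)
    (X Y : A T) (a : Chain (A T) X Y q) :
    HEq (ξ S W pre ((𝒜.res lst).obj X) ((𝒜.res lst).obj Y) (a.mapC (𝒜.res lst)))
      (ξ S T δ X Y a) := by
  obtain ⟨hW, hl⟩ := hlst
  subst hW
  have hl' := eq_of_heq hl
  subst hl'
  have hδ' := eq_of_heq hδ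
  subst hδ'
  have hres := 𝒜.res_id W
  exact heq_cpq ξ rfl HEq.rfl (by rw [hres]; rfl) (by rw [hres]; rfl)
    (HEq.trans (heq_mapC hres a) (heq_of_eq (mapC_id a)))

theorem T2_eq_of_idAt1 {p' q : ℕ} (ξ : Cpq 𝒜 M (p' + 1) q) {S Mid T : 𝒰} (u : S ⟶ Mid)
    (σ' : Chain 𝒰 Mid T (p' + 1)) (X Y : A T) (a : Chain (A T) X Y q)
    (hid : IdAt (Chain.cons u σ') 1)
    (e₁ : (((Chain.cons u σ').del p').star 𝒜).obj X = ((Chain.cons u σ').star 𝒜).obj X)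
    (e₂ : (((Chain.cons u σ').del p').ast 𝒜).obj Y = ((Chain.cons u σ').ast 𝒜).obj Y) :
    T2 ξ u σ' X Y a =
      ((-1 : ℤ) ^ (p' + 1 + 1)) •
        M.castV e₁ e₂ (ξ S T ((Chain.cons u σ').del p') X Y a) := by
  obtain ⟨hobj, hsp⟩ := twist_isId_app (𝒜 := 𝒜) (Chain.cons u σ').initLast.2.1.comp
    (Chain.cons u σ').initLast.2.2 (isId_last _ hid) Y
  unfold T2
  rw [hsp, actL_eqToHom, castV_castV, castV_castV]
  congr 1
  exact eq_of_heq ((heq_castV _ _ _).trans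
    (HEq.trans
      (heq_T2core ξ (Chain.cons u σ').initLast.2.1 (Chain.cons u σ').initLast.2.2
        (isId_last _ hid) ((Chain.cons u σ').del p') (del_last_heq _ hid) X Y a)
      (heq_castV e₁ e₂ _).symm))

theorem TI_pair_cancel {p' q : ℕ} (ξ : Cpq 𝒜 M (p' + 1) q) {S Mid T : 𝒰} (u : S ⟶ Mid)
    (σ' : Chain 𝒰 Mid T (p' + 1)) (X Y : A T) (a : Chain (A T) X Y q) (c : ℕ)
    (j j' : Fin (p' + 1)) (jv : ℕ) (hjv : j.val = jv) (hj' : j'.val = jv + 1)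
    (hid : IdAt (Chain.cons u σ') (c + 2)) (harith : (c + 2) + jv = p' + 1) :
    TI ξ u σ' X Y a j + TI ξ u σ' X Y a j' = 0 := by
  have hp1 : PairHasId (Chain.cons u σ') jv :=
    pairHasId_left (Chain.cons u σ') (c + 2) jv hid (by omega)
  have hp2 : PairHasId (Chain.cons u σ') (jv + 1) :=
    pairHasId_right (Chain.cons u σ') (c + 2) (jv + 1) hid (by omega) (by omega)
  have hdel : (Chain.cons u σ').del jv = (Chain.cons u σ').del (jv + 1) :=
    del_del_succ_of_idAt (Chain.cons u σ') c jv hid (by omega)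
  obtain ⟨hst, _⟩ := eps_eqToHom_of_pairHasId 𝒜 (Chain.cons u σ') jv hp1
  have e₁ := congrArg (fun F => F.obj X) hst
  have e₂ : (((Chain.cons u σ').del jv).ast 𝒜).obj Y =
      ((Chain.cons u σ').ast 𝒜).obj Y := by rw [Chain.ast_del]
  have key : M.castV (show (((Chain.cons u σ').del (jv + 1)).star 𝒜).obj X =
        ((Chain.cons u σ').star 𝒜).obj X by rw [← hdel]; exact e₁)
      (show (((Chain.cons u σ').del (jv + 1)).ast 𝒜).obj Y =
        ((Chain.cons u σ').ast 𝒜).obj Y by rw [← hdel]; exact e₂)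
      (ξ S T ((Chain.cons u σ').del (jv + 1)) X Y a) =
      M.castV e₁ e₂ (ξ S T ((Chain.cons u σ').del jv) X Y a) :=
    eq_of_heq ((heq_castV _ _ _).trans
      (HEq.trans (heq_cpq ξ rfl (heq_of_eq hdel.symm) HEq.rfl HEq.rfl HEq.rfl)
        (heq_castV e₁ e₂ _).symm))
  rw [TI_pairHasId ξ u σ' X Y a j jv hjv hp1 e₁ e₂,
    TI_pairHasId ξ u σ' X Y a j' (jv + 1) hj' hp2
      (by rw [← hdel]; exact e₁) (by rw [← hdel]; exact e₂),
    key]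
  exact smul_pow_succ_cancel jv _

theorem TI_last_T2_cancel {p' q : ℕ} (ξ : Cpq 𝒜 M (p' + 1) q) {S Mid T : 𝒰} (u : S ⟶ Mid)
    (σ' : Chain 𝒰 Mid T (p' + 1)) (X Y : A T) (a : Chain (A T) X Y q)
    (hid : IdAt (Chain.cons u σ') 1) (j : Fin (p' + 1)) (hj : j.val = p') :
    TI ξ u σ' X Y a j + T2 ξ u σ' X Y a = 0 := by
  have hp : PairHasId (Chain.cons u σ') p' :=
    pairHasId_left (Chain.cons u σ') 1 p' hid (by omega)
  obtain ⟨hst, _⟩ := eps_eqToHom_of_pairHasId 𝒜 (Chain.cons u σ') p' hp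
  have e₁ := congrArg (fun F => F.obj X) hst
  have e₂ : (((Chain.cons u σ').del p').ast 𝒜).obj Y =
      ((Chain.cons u σ').ast 𝒜).obj Y := by rw [Chain.ast_del]
  rw [TI_pairHasId ξ u σ' X Y a j p' hj hp e₁ e₂,
    T2_eq_of_idAt1 ξ u σ' X Y a hid e₁ e₂]
  exact smul_pow_succ_cancel p' _

theorem T0_match {q kk p : ℕ} (φ : Cpq 𝒜 M (p + 1) q) {S Mid T : 𝒰} (u : S ⟶ Mid)
    (σ' : Chain 𝒰 Mid T p) (X Y : A T) (a : Chain (A T) X Y q)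
    (e₁ : ((Chain.cons u (insL σ' (p - kk))).star 𝒜).obj X =
      ((Chain.cons u σ').star 𝒜).obj X)
    (e₂ : ((Chain.cons u (insL σ' (p - kk))).ast 𝒜).obj Y =
      ((Chain.cons u σ').ast 𝒜).obj Y) :
    T0 (psi 𝒜 M kk p φ) u σ' X Y a =
      ((-1 : ℤ) ^ (p - kk + 1)) •
        M.castV e₁ e₂ (T0 φ u (insL σ' (p - kk)) X Y a) := by
  unfold T0 psi
  rw [rst_zsmul, castV_zsmul, actL_zsmul]
  refine (castV_zsmul _ _ _ _).trans ?_
  refine congrArg (fun z => ((-1 : ℤ) ^ (p - kk + 1)) • z) (eq_of_heq ?_)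
  refine ((heq_castV _ _ _).trans ?_).trans
    ((heq_castV e₁ e₂ _).trans (heq_castV _ _ _)).symm
  refine heq_actL (by rw [star_insL]) (by rw [comp_insL]) (by rw [comp_insL])
    (by rw [comp_insL σ' (p - kk)]) ?_
  exact (heq_castV _ _ _).trans
    ((heq_rst u (by rw [star_insL]) (by rw [ast_insL])
      (heq_castV _ _ _)).trans (heq_castV _ _ _).symm)

theorem TI_match {q kk p' : ℕ} (φ : Cpq 𝒜 M (p' + 1 + 1) q) {S Mid T : 𝒰} (u : S ⟶ Mid)
    (σ' : Chain 𝒰 Mid T (p' + 1)) (X Y : A T) (a : Chain (A T) X Y q)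
    (j : Fin (p' + 1)) (jj : Fin (p' + 1 + 1)) (hjj : jj.val = j.val)
    (hj : j.val + 1 ≤ p' + 1 - kk) (hkk : kk ≤ p' + 1)
    (e₁ : ((Chain.cons u (insL σ' (p' + 1 - kk))).star 𝒜).obj X =
      ((Chain.cons u σ').star 𝒜).obj X)
    (e₂ : ((Chain.cons u (insL σ' (p' + 1 - kk))).ast 𝒜).obj Y =
      ((Chain.cons u σ').ast 𝒜).obj Y) :
    TI (psi 𝒜 M kk (p' + 1) φ) u σ' X Y a j =
      ((-1 : ℤ) ^ (p' + 1 - kk + 1)) •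
        M.castV e₁ e₂ (TI φ u (insL σ' (p' + 1 - kk)) X Y a jj) := by
  obtain ⟨jjv, hlt⟩ := jj
  simp only [Fin.val_mk] at hjj
  subst hjj
  have hch : (Chain.cons u (insL σ' (p' + 1 - kk))).del j.val =
      insL ((Chain.cons u σ').del j.val) (p' + 1 - kk) :=
    del_insL_comm (Chain.cons u σ') (p' + 1 - kk) (by omega) (by omega)
  have heps : HEq (((Chain.cons u (insL σ' (p' + 1 - kk))).eps 𝒜 j.val).app X)
      (((Chain.cons u σ').eps 𝒜 j.val).app X) :=
    heq_eps_insL 𝒜 (Chain.cons u σ') (p' + 1 - kk) (by omega) (by omega) X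
  rw [TI_eq, TI_eq]
  unfold psi
  rw [actR_zsmul, castV_zsmul, castV_zsmul, smul_smul, smul_smul, Fin.val_mk,
    mul_comm ((-1 : ℤ) ^ (j.val + 1)) ((-1 : ℤ) ^ (p' + 1 - kk + 1))]
  refine congrArg (fun z => ((-1 : ℤ) ^ (p' + 1 - kk + 1) * (-1 : ℤ) ^ (j.val + 1)) • z)
    (eq_of_heq ?_)
  refine ((heq_castV _ _ _).trans ?_).trans
    ((heq_castV e₁ e₂ _).trans (heq_castV _ _ _)).symm
  refine heq_actR (by rw [hch, star_insL]) e₁.symm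
    (by rw [hch, ← Chain.res_comp_eq_ast, ← Chain.res_comp_eq_ast, comp_insL])
    heps.symm ?_
  exact (heq_castV _ _ _).trans
    (heq_cpq φ rfl (heq_of_eq hch.symm) HEq.rfl HEq.rfl HEq.rfl)

theorem E_phi_left {q kk p' : ℕ} (φ : Cpq 𝒜 M (p' + 1 + 1) q) {S Mid T : 𝒰} (u : S ⟶ Mid)
    (σ' : Chain 𝒰 Mid T (p' + 1)) (X Y : A T) (a : Chain (A T) X Y q)
    (jj : Fin (p' + 1 + 1)) (hjj : jj.val = p' + 1 - kk) (hkk : kk ≤ p' + 1)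
    (e₁ : ((Chain.cons u (insL σ' (p' + 1 - kk))).star 𝒜).obj X =
      ((Chain.cons u σ').star 𝒜).obj X)
    (e₂ : ((Chain.cons u (insL σ' (p' + 1 - kk))).ast 𝒜).obj Y =
      ((Chain.cons u σ').ast 𝒜).obj Y) :
    M.castV e₁ e₂ (TI φ u (insL σ' (p' + 1 - kk)) X Y a jj) =
      ((-1 : ℤ) ^ (p' + 1 - kk + 1)) • φ S T (Chain.cons u σ') X Y a := by
  have hins : IdAt (Chain.cons u (insL σ' (p' + 1 - kk))) (kk + 1) :=
    idAt_insL (Chain.cons u σ') (p' + 1 - kk + 1) (kk + 1) (by omega) (by omega)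
  have hp : PairHasId (Chain.cons u (insL σ' (p' + 1 - kk))) (p' + 1 - kk) :=
    pairHasId_left _ (kk + 1) (p' + 1 - kk) hins (by omega)
  have hdel : (Chain.cons u (insL σ' (p' + 1 - kk))).del (p' + 1 - kk) =
      Chain.cons u σ' :=
    del_insL_left (Chain.cons u σ') (p' + 1 - kk) (by omega)
  rw [TI_pairHasId φ u (insL σ' (p' + 1 - kk)) X Y a jj (p' + 1 - kk) hjj hp
    (by rw [hdel]; exact e₁.symm) (by rw [hdel]; exact e₂.symm)]
  exact eq_of_heq ((heq_castV e₁ e₂ _).trans (heq_zsmul e₁ e₂ _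
    ((heq_castV _ _ _).trans
      (heq_cpq φ rfl (heq_of_eq hdel) HEq.rfl HEq.rfl HEq.rfl))))

theorem E_phi_right {q kk p' : ℕ} (φ : Cpq 𝒜 M (p' + 1 + 1) q) {S Mid T : 𝒰} (u : S ⟶ Mid)
    (σ' : Chain 𝒰 Mid T (p' + 1)) (X Y : A T) (a : Chain (A T) X Y q)
    (jj : Fin (p' + 1 + 1)) (hjj : jj.val = p' + 1 - kk + 1) (hkk : kk ≤ p' + 1)
    (hkk1 : 1 ≤ kk)
    (e₁ : ((Chain.cons u (insL σ' (p' + 1 - kk))).star 𝒜).obj X =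
      ((Chain.cons u σ').star 𝒜).obj X)
    (e₂ : ((Chain.cons u (insL σ' (p' + 1 - kk))).ast 𝒜).obj Y =
      ((Chain.cons u σ').ast 𝒜).obj Y) :
    M.castV e₁ e₂ (TI φ u (insL σ' (p' + 1 - kk)) X Y a jj) =
      ((-1 : ℤ) ^ (p' + 1 - kk + 1 + 1)) • φ S T (Chain.cons u σ') X Y a := by
  have hins : IdAt (Chain.cons u (insL σ' (p' + 1 - kk))) (kk + 1) :=
    idAt_insL (Chain.cons u σ') (p' + 1 - kk + 1) (kk + 1) (by omega) (by omega)
  have hp : PairHasId (Chain.cons u (insL σ' (p' + 1 - kk))) (p' + 1 - kk + 1) :=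
    pairHasId_right _ (kk + 1) (p' + 1 - kk + 1) hins (by omega) (by omega)
  have hdel : (Chain.cons u (insL σ' (p' + 1 - kk))).del (p' + 1 - kk + 1) =
      Chain.cons u σ' :=
    del_insL_right (Chain.cons u σ') (p' + 1 - kk + 1) (by omega)
  rw [TI_pairHasId φ u (insL σ' (p' + 1 - kk)) X Y a jj (p' + 1 - kk + 1) hjj hp
    (by rw [hdel]; exact e₁.symm) (by rw [hdel]; exact e₂.symm)]
  exact eq_of_heq ((heq_castV e₁ e₂ _).trans (heq_zsmul e₁ e₂ _
    ((heq_castV _ _ _).trans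
      (heq_cpq φ rfl (heq_of_eq hdel) HEq.rfl HEq.rfl HEq.rfl))))

theorem E_psi {q kk' p' : ℕ} (φ : Cpq 𝒜 M (p' + 1 + 1) q) {S Mid T : 𝒰} (u : S ⟶ Mid)
    (σ' : Chain 𝒰 Mid T (p' + 1)) (X Y : A T) (a : Chain (A T) X Y q)
    (j : Fin (p' + 1)) (hj : j.val = p' + 1 - (kk' + 1)) (hkk : kk' + 1 ≤ p' + 1)
    (hid : IdAt (Chain.cons u σ') (kk' + 2)) :
    TI (psi 𝒜 M (kk' + 1) (p' + 1) φ) u σ' X Y a j =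
      φ S T (Chain.cons u σ') X Y a := by
  have hp : PairHasId (Chain.cons u σ') (p' + 1 - (kk' + 1)) :=
    pairHasId_right _ (kk' + 2) (p' + 1 - (kk' + 1)) hid (by omega) (by omega)
  have hins : insL ((Chain.cons u σ').del (p' + 1 - (kk' + 1))) (p' + 1 - (kk' + 1)) =
      Chain.cons u σ' :=
    insL_del_of_idAt (Chain.cons u σ') kk' (p' + 1 - (kk' + 1)) hid (by omega)
  have e₁ : (((Chain.cons u σ').del (p' + 1 - (kk' + 1))).star 𝒜).obj X =
      ((Chain.cons u σ').star 𝒜).obj X := by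
    conv_rhs => rw [← hins]
    rw [star_insL]
  have e₂ : (((Chain.cons u σ').del (p' + 1 - (kk' + 1))).ast 𝒜).obj Y =
      ((Chain.cons u σ').ast 𝒜).obj Y := by
    conv_rhs => rw [← hins]
    rw [ast_insL]
  rw [TI_pairHasId (psi 𝒜 M (kk' + 1) (p' + 1) φ) u σ' X Y a j
    (p' + 1 - (kk' + 1)) hj hp e₁ e₂]
  unfold psi
  rw [castV_zsmul, smul_smul]
  have hcoef : ((-1 : ℤ) ^ (p' + 1 - (kk' + 1) + 1)) *
      ((-1 : ℤ) ^ (p' + 1 - (kk' + 1) + 1)) = 1 := by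
    rw [← pow_add]
    exact Even.neg_one_pow ⟨p' + 1 - (kk' + 1) + 1, by ring⟩
  rw [hcoef, one_smul]
  exact eq_of_heq ((heq_castV _ _ _).trans ((heq_castV _ _ _).trans
    (heq_cpq φ rfl (heq_of_eq hins) HEq.rfl HEq.rfl HEq.rfl)))

theorem E_psi0 {q p' : ℕ} (φ : Cpq 𝒜 M (p' + 1 + 1) q) {S Mid T : 𝒰} (u : S ⟶ Mid)
    (σ' : Chain 𝒰 Mid T (p' + 1)) (X Y : A T) (a : Chain (A T) X Y q)
    (j : Fin (p' + 1)) (hj : j.val = p') (hid : IdAt (Chain.cons u σ') 1) :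
    TI (psi 𝒜 M 0 (p' + 1) φ) u σ' X Y a j =
      -(φ S T (Chain.cons u σ') X Y a) := by
  have hp : PairHasId (Chain.cons u σ') p' :=
    pairHasId_left _ 1 p' hid (by omega)
  have hin2 : insL ((Chain.cons u σ').del p') (p' + 1 - 0) = Chain.cons u σ' := by
    rw [Nat.sub_zero]
    exact ins_del_last (Chain.cons u σ') hid
  have e₁ : (((Chain.cons u σ').del p').star 𝒜).obj X =
      ((Chain.cons u σ').star 𝒜).obj X := by
    conv_rhs => rw [← hin2]
    rw [star_insL]
  have e₂ : (((Chain.cons u σ').del p').ast 𝒜).obj Y =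
      ((Chain.cons u σ').ast 𝒜).obj Y := by
    conv_rhs => rw [← hin2]
    rw [ast_insL]
  rw [TI_pairHasId (psi 𝒜 M 0 (p' + 1) φ) u σ' X Y a j p' hj hp e₁ e₂]
  unfold psi
  rw [castV_zsmul, smul_smul]
  have hcoef : ((-1 : ℤ) ^ (p' + 1)) * ((-1 : ℤ) ^ (p' + 1 - 0 + 1)) = -1 := by
    rw [Nat.sub_zero, ← pow_add]
    exact Odd.neg_one_pow ⟨p' + 1, by ring⟩
  rw [hcoef, neg_one_smul]
  refine congrArg Neg.neg (eq_of_heq ?_)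
  exact (heq_castV _ _ _).trans ((heq_castV _ _ _).trans
    (heq_cpq φ rfl (heq_of_eq hin2) HEq.rfl HEq.rfl HEq.rfl))

theorem psi_normalized {q kk p : ℕ} (φ : Cpq 𝒜 M (p + 1) q) (hn : Normalized 𝒜 M φ) :
    Normalized 𝒜 M (psi 𝒜 M kk p φ) := by
  intro S T σ X Y a ha
  unfold psi
  rw [hn S T _ X Y a ha, castV_zero, smul_zero]

theorem psi_rightReduced {q kk p : ℕ} (φ : Cpq 𝒜 M (p + 1) q)
    (hr : RightReduced 𝒜 M kk φ) (hkp : kk ≤ p) :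
    RightReduced 𝒜 M kk (psi 𝒜 M kk p φ) := by
  intro S T σ hdeg X Y a
  obtain ⟨c, hc, hid⟩ := idAt_of_rightDeg σ kk hdeg
  have h1 : IdAt (insL σ (p - kk)) c :=
    idAt_insL_of_idAt σ (p - kk) c hid (by omega)
  unfold psi
  rw [hr S T _ (rightDeg_of_idAt h1 hc) X Y a, castV_zero, smul_zero]

theorem castV_neg {U : 𝒰} {X X' Y Y' : A U} (h₁ : X = X') (h₂ : Y = Y')
    (x : M.val U X Y) : M.castV h₁ h₂ (-x) = -(M.castV h₁ h₂ x) := by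
  subst h₁ h₂
  rfl

theorem castV_sum {U : 𝒰} {X X' Y Y' : A U} (h₁ : X = X') (h₂ : Y = Y')
    {n : ℕ} (f : Fin n → M.val U X Y) :
    M.castV h₁ h₂ (∑ e, f e) = ∑ e, M.castV h₁ h₂ (f e) :=
  map_sum (AddMonoidHom.mk' (M.castV h₁ h₂) (castV_add h₁ h₂)) f Finset.univ

theorem TI_zero' {p q : ℕ} (ξ : Cpq 𝒜 M p q) {S Mid T : 𝒰} (u : S ⟶ Mid)
    (σ' : Chain 𝒰 Mid T p) (X Y : A T) (a : Chain (A T) X Y q) (j : Fin p)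
    (hz : ∀ σf : Chain 𝒰 S T p, ξ S T σf X Y a = 0) : TI ξ u σ' X Y a j = 0 := by
  unfold TI
  dsimp only
  rw [hz, actR_zero, castV_zero, smul_zero]

theorem sum_two {V : Type w₂} [AddCommGroup V] {n : ℕ} (f : Fin n → V) (i i' : Fin n)
    (hne : i ≠ i') (hz : ∀ d, d ≠ i → d ≠ i' → f d = 0) :
    ∑ d, f d = f i + f i' := by
  have h := Finset.sum_subset (Finset.subset_univ ({i, i'} : Finset (Fin n)))
    (fun x _ hx => hz x (fun h1 => hx (by simp [h1])) (fun h2 => hx (by simp [h2])))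
  rw [← h, Finset.sum_pair hne]

theorem sum_shift {V : Type w₂} [AddCommGroup V] {p m : ℕ} (hm : m + 1 ≤ p)
    (f : Fin p → V) (g : Fin (p + 1) → V)
    (h1 : ∀ d : Fin p, d.val ≠ m + 1 → f d = g d.castSucc)
    (h2 : ∀ d : Fin p, d.val = m + 1 → f d = 0)
    (h3 : ∀ e : Fin (p + 1), m + 2 ≤ e.val → g e = 0) :
    ∑ d, f d = (∑ e, g e) - g ⟨m + 1, by omega⟩ := by
  rcases Nat.lt_or_ge (m + 1) p with hlt | hge
  · have hfun : ∀ d : Fin p, f d =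
        g d.castSucc - (if d = (⟨m + 1, hlt⟩ : Fin p) then g d.castSucc else 0) := by
      intro d
      by_cases hd : d = ⟨m + 1, hlt⟩
      · subst hd
        rw [h2 _ rfl, if_pos rfl]
        exact (sub_self _).symm
      · rw [h1 d (fun hv => hd (Fin.ext hv)), if_neg hd, sub_zero]
    rw [Finset.sum_congr rfl (fun d _ => hfun d), Finset.sum_sub_distrib,
      Finset.sum_ite_eq' Finset.univ (⟨m + 1, hlt⟩ : Fin p) (fun d => g d.castSucc)]
    simp only [Finset.mem_univ, if_pos]
    rw [Fin.sum_univ_castSucc (f := g)]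
    have hlast : g (Fin.last p) = 0 := h3 _ (by simp [Fin.last]; omega)
    rw [hlast, add_zero]
    have hcs : (⟨m + 1, hlt⟩ : Fin p).castSucc = (⟨m + 1, by omega⟩ : Fin (p + 1)) := rfl
    rw [hcs]
  · have hp : p = m + 1 := by omega
    subst hp
    have hfun : ∀ d : Fin (m + 1), f d = g d.castSucc := fun d =>
      h1 d (by have := d.isLt; omega)
    rw [Finset.sum_congr rfl (fun d _ => hfun d), Fin.sum_univ_castSucc (f := g)]
    have hlast : Fin.last (m + 1) = (⟨m + 1, by omega⟩ : Fin (m + 2)) := rfl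
    rw [hlast, add_sub_cancel_right]

theorem E_T2_psi0 {q : ℕ} (φ : Cpq 𝒜 M 1 q) {S Mid T : 𝒰} (u : S ⟶ Mid)
    (σ' : Chain 𝒰 Mid T 0) (X Y : A T) (a : Chain (A T) X Y q)
    (hid : IdAt (Chain.cons u σ') 1) :
    T2 (psi 𝒜 M 0 0 φ) u σ' X Y a = φ S T (Chain.cons u σ') X Y a := by
  cases σ' with
  | nil =>
    have hu : IsId u := by
      rcases hid with ⟨_, hu⟩ | h
      · exact hu
      · exact h.elim
    obtain ⟨hW, hl⟩ := hu
    subst hW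
    have hl' := eq_of_heq hl
    subst hl'
    obtain ⟨hobj, hsp⟩ := twist_isId_app (𝒜 := 𝒜)
      ((Chain.cons (𝟙 S) (Chain.nil S)).initLast.2.1.comp)
      ((Chain.cons (𝟙 S) (Chain.nil S)).initLast.2.2) (isId_id S) Y
    unfold T2 psi
    rw [hsp, actL_eqToHom, castV_zsmul, castV_zsmul, castV_zsmul, smul_smul]
    have hco : ((-1 : ℤ) ^ (0 + 1)) * ((-1 : ℤ) ^ (0 - 0 + 1)) = 1 := by norm_num
    rw [hco, one_smul]
    refine eq_of_heq (((heq_castV _ _ _).trans ((heq_castV _ _ _).trans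
      ((heq_castV _ _ _).trans ((heq_castV _ _ _).trans ?_)))))
    have hres := 𝒜.res_id S
    exact heq_cpq φ rfl HEq.rfl
      (by show HEq ((𝒜.res (𝟙 S)).obj X) X; rw [hres]; exact HEq.rfl)
      (by show HEq ((𝒜.res (𝟙 S)).obj Y) Y; rw [hres]; exact HEq.rfl)
      (HEq.trans (heq_mapC hres a) (heq_of_eq (mapC_id a)))

theorem dSimp_psi_zero {q kk p : ℕ} (φ : Cpq 𝒜 M (p + 1) q) (hkp : kk ≤ p)
    (hrψ : RightReduced 𝒜 M kk (psi 𝒜 M kk p φ)) {S T : 𝒰} (σ : Chain 𝒰 S T (p + 1))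
    (c : ℕ) (hc1 : 1 ≤ c) (hckk : c ≤ kk) (hid : IdAt σ c) (X Y : A T)
    (a : Chain (A T) X Y q) :
    dSimp 𝒜 M (psi 𝒜 M kk p φ) S T σ X Y a = 0 := by
  cases p with
  | zero => omega
  | succ p' =>
  match σ with
  | .cons u σ' =>
  rw [dSimp_cons]
  have hT0 : T0 (psi 𝒜 M kk (p' + 1) φ) u σ' X Y a = 0 :=
    T0_zero _ _ _ _ _ _ (hrψ _ _ σ'
      (rightDeg_of_idAt (idAt_tail hid (by have := idAt_le _ _ hid; omega)) hckk) X Y a)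
  rcases Nat.lt_or_ge 1 c with hc2 | hc1'
  · -- 2 ≤ c : the two faces touching the identity cancel
    obtain ⟨c'', rfl⟩ : ∃ c'', c = c'' + 2 := ⟨c - 2, by omega⟩
    have hT2 : T2 (psi 𝒜 M kk (p' + 1) φ) u σ' X Y a = 0 :=
      T2_zero _ _ _ _ _ _ (hrψ _ _ _
        (rightDeg_of_idAt (idAt_initLast (Chain.cons u σ') c'' hid) (by omega)) _ _ _)
    have hsum : (∑ j, TI (psi 𝒜 M kk (p' + 1) φ) u σ' X Y a j) =
        TI (psi 𝒜 M kk (p' + 1) φ) u σ' X Y a ⟨p' + 1 - (c'' + 2), by omega⟩ +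
        TI (psi 𝒜 M kk (p' + 1) φ) u σ' X Y a ⟨p' + 1 - (c'' + 2) + 1, by omega⟩ := by
      refine sum_two _ _ _ (by
        intro h
        have := congrArg Fin.val h
        simp only [Fin.val_mk] at this
        omega) ?_
      intro d hd1 hd2
      have hd1' : d.val ≠ p' + 1 - (c'' + 2) := fun hv => hd1 (Fin.ext (by rw [hv]))
      have hd2' : d.val ≠ p' + 1 - (c'' + 2) + 1 := fun hv => hd2 (Fin.ext (by rw [hv]))
      rcases Nat.lt_or_ge d.val (p' + 1 - (c'' + 2)) with hlt | hge
      · exact TI_zero _ _ _ _ _ _ _ (hrψ _ _ _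
          (rightDeg_of_idAt (idAt_del_left (Chain.cons u σ') d.val (c'' + 2) hid
            (by omega)) (by omega)) _ _ _)
      · have hgt : p' + 1 - (c'' + 2) + 1 < d.val := by omega
        exact TI_zero _ _ _ _ _ _ _ (hrψ _ _ _
          (rightDeg_of_idAt (idAt_del_right (Chain.cons u σ') d.val (c'' + 1) hid
            (by have := d.isLt; omega) (by omega)) (by omega)) _ _ _)
    have hpair := TI_pair_cancel (psi 𝒜 M kk (p' + 1) φ) u σ' X Y a c''
      ⟨p' + 1 - (c'' + 2), by omega⟩ ⟨p' + 1 - (c'' + 2) + 1, by omega⟩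
      (p' + 1 - (c'' + 2)) rfl rfl hid (by omega)
    rw [hT0, hsum, hpair, hT2]
    simp
  · -- c = 1 : the last face cancels against the T2 term
    have hc : c = 1 := by omega
    subst hc
    have hsum : (∑ j, TI (psi 𝒜 M kk (p' + 1) φ) u σ' X Y a j) =
        TI (psi 𝒜 M kk (p' + 1) φ) u σ' X Y a ⟨p', by omega⟩ := by
      refine Fintype.sum_eq_single _ ?_
      intro d hd
      have hd' : d.val ≠ p' := fun hv => hd (Fin.ext (by rw [hv]))
      exact TI_zero _ _ _ _ _ _ _ (hrψ _ _ _
        (rightDeg_of_idAt (idAt_del_left (Chain.cons u σ') d.val 1 hid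
          (by have := d.isLt; omega)) hckk) _ _ _)
    have hpair := TI_last_T2_cancel (psi 𝒜 M kk (p' + 1) φ) u σ' X Y a hid
      ⟨p', by omega⟩ rfl
    rw [hT0, hsum, zero_add, hpair]

theorem dSimp_psi_id {q kk p : ℕ} (φ : Cpq 𝒜 M (p + 1) q) (hkp : kk ≤ p)
    (hr : RightReduced 𝒜 M kk φ)
    (hd : RightReduced 𝒜 M (kk + 1) (dSimp 𝒜 M φ))
    (hrψ : RightReduced 𝒜 M kk (psi 𝒜 M kk p φ))
    {S T : 𝒰} (σ : Chain 𝒰 S T (p + 1)) (hid : IdAt σ (kk + 1)) (X Y : A T)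
    (a : Chain (A T) X Y q) :
    dSimp 𝒜 M (psi 𝒜 M kk p φ) S T σ X Y a = φ S T σ X Y a := by
  match σ, hid with
  | .cons u σ', hid =>
  have hIdIns : IdAt (Chain.cons u (insL σ' (p - kk))) (kk + 1) :=
    idAt_insL (Chain.cons u σ') (p - kk + 1) (kk + 1) (by omega) (by omega)
  have hzero : dSimp 𝒜 M φ S T (Chain.cons u (insL σ' (p - kk))) X Y a = 0 :=
    hd S T _ (rightDeg_of_idAt hIdIns (le_refl _)) X Y a
  rw [dSimp_cons] at hzero
  rw [dSimp_cons]
  have e₁ : ((Chain.cons u (insL σ' (p - kk))).star 𝒜).obj X =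
      ((Chain.cons u σ').star 𝒜).obj X := by
    show ((insL σ' (p - kk)).star 𝒜 ⋙ 𝒜.res u).obj X = _
    rw [star_insL]
    rfl
  have e₂ : ((Chain.cons u (insL σ' (p - kk))).ast 𝒜).obj Y =
      ((Chain.cons u σ').ast 𝒜).obj Y := by
    rw [← Chain.res_comp_eq_ast, ← Chain.res_comp_eq_ast, Chain.comp_cons',
      Chain.comp_cons', comp_insL]
  cases kk with
  | zero =>
    cases p with
    | zero =>
      -- length-one simplex consisting of an identity
      have hPairIns := TI_last_T2_cancel φ u (insL σ' (0 - 0)) X Y a hIdIns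
        (0 : Fin 1) rfl
      have hT0Ins : T0 φ u (insL σ' (0 - 0)) X Y a = 0 := by
        have h' := hzero
        rw [Fin.sum_univ_one] at h'
        have h'' : T0 φ u (insL σ' (0 - 0)) X Y a +
            (TI φ u (insL σ' (0 - 0)) X Y a 0 + T2 φ u (insL σ' (0 - 0)) X Y a) = 0 := by
          rw [← add_assoc]
          exact h'
        rw [hPairIns, add_zero] at h''
        exact h''
      rw [T0_match φ u σ' X Y a e₁ e₂, hT0Ins, castV_zero, smul_zero,
        Fin.sum_univ_zero, E_T2_psi0 φ u σ' X Y a hid]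
      simp
    | succ p'' =>
      have hmatch : ∀ d : Fin (p'' + 1),
          TI (psi 𝒜 M 0 (p'' + 1) φ) u σ' X Y a d =
          ((-1 : ℤ) ^ (p'' + 1 - 0 + 1)) •
            M.castV e₁ e₂ (TI φ u (insL σ' (p'' + 1 - 0)) X Y a d.castSucc) :=
        fun d => TI_match φ u σ' X Y a d d.castSucc rfl
          (by have := d.isLt; omega) (by omega) e₁ e₂
      have hcast : (∑ e : Fin (p'' + 1 + 1), ((-1 : ℤ) ^ (p'' + 1 - 0 + 1)) •
          M.castV e₁ e₂ (TI φ u (insL σ' (p'' + 1 - 0)) X Y a e)) =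
          ((-1 : ℤ) ^ (p'' + 1 - 0 + 1)) •
            M.castV e₁ e₂ (∑ e, TI φ u (insL σ' (p'' + 1 - 0)) X Y a e) := by
        rw [castV_sum, Finset.smul_sum]
      have hsplit := Fin.sum_univ_castSucc
        (f := fun e : Fin (p'' + 1 + 1) => ((-1 : ℤ) ^ (p'' + 1 - 0 + 1)) •
          M.castV e₁ e₂ (TI φ u (insL σ' (p'' + 1 - 0)) X Y a e))
      have hPairIns := TI_last_T2_cancel φ u (insL σ' (p'' + 1 - 0)) X Y a hIdIns
        (Fin.last (p'' + 1)) rfl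
      have hpairψ := TI_last_T2_cancel (psi 𝒜 M 0 (p'' + 1) φ) u σ' X Y a hid
        (Fin.last p'') rfl
      have hlastψ : TI (psi 𝒜 M 0 (p'' + 1) φ) u σ' X Y a (Fin.last p'') =
          -(φ S T (Chain.cons u σ') X Y a) :=
        E_psi0 φ u σ' X Y a (Fin.last p'') rfl hid
      have hT2ψ : T2 (psi 𝒜 M 0 (p'' + 1) φ) u σ' X Y a =
          φ S T (Chain.cons u σ') X Y a := by
        have h := hpairψ
        rw [hlastψ, neg_add_eq_zero] at h
        exact h.symm
      have hLastIns : TI φ u (insL σ' (p'' + 1 - 0)) X Y a (Fin.last (p'' + 1)) =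
          -(T2 φ u (insL σ' (p'' + 1 - 0)) X Y a) := by
        rw [eq_neg_iff_add_eq_zero]
        exact hPairIns
      have hS : (∑ e, TI φ u (insL σ' (p'' + 1 - 0)) X Y a e) =
          -(T2 φ u (insL σ' (p'' + 1 - 0)) X Y a) -
            T0 φ u (insL σ' (p'' + 1 - 0)) X Y a := by
        have h1 := neg_eq_of_add_eq_zero_left hzero
        rw [eq_sub_iff_add_eq, h1]
        abel
      rw [T0_match φ u σ' X Y a e₁ e₂, Finset.sum_congr rfl (fun d _ => hmatch d),
        hT2ψ]
      have hmid : (∑ d : Fin (p'' + 1), ((-1 : ℤ) ^ (p'' + 1 - 0 + 1)) •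
          M.castV e₁ e₂ (TI φ u (insL σ' (p'' + 1 - 0)) X Y a d.castSucc)) =
          ((-1 : ℤ) ^ (p'' + 1 - 0 + 1)) •
            M.castV e₁ e₂ (∑ e, TI φ u (insL σ' (p'' + 1 - 0)) X Y a e) -
          ((-1 : ℤ) ^ (p'' + 1 - 0 + 1)) •
            M.castV e₁ e₂ (TI φ u (insL σ' (p'' + 1 - 0)) X Y a (Fin.last (p'' + 1))) := by
        rw [← hcast, hsplit]
        abel
      rw [hmid, hS, hLastIns]
      simp only [castV_sub, castV_neg, smul_sub, smul_neg]
      abel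
  | succ kk'' =>
    cases p with
    | zero => omega
    | succ p'' =>
    have hmatch : ∀ d : Fin (p'' + 1), d.val ≠ (p'' + 1 - (kk'' + 1)) + 1 →
        TI (psi 𝒜 M (kk'' + 1) (p'' + 1) φ) u σ' X Y a d =
        ((-1 : ℤ) ^ (p'' + 1 - (kk'' + 1) + 1)) •
          M.castV e₁ e₂ (TI φ u (insL σ' (p'' + 1 - (kk'' + 1))) X Y a d.castSucc) := by
      intro d hd
      rcases Nat.lt_or_ge d.val (p'' + 1 - (kk'' + 1)) with hlt | hge
      · exact TI_match φ u σ' X Y a d d.castSucc rfl (by omega) (by omega) e₁ e₂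
      · rcases Nat.eq_or_lt_of_le hge with heq | hgt
        · rw [E_psi φ u σ' X Y a d heq.symm (by omega) hid,
            E_phi_left φ u σ' X Y a d.castSucc heq.symm (by omega) e₁ e₂,
            smul_smul, ← pow_add,
            Even.neg_one_pow ⟨p'' + 1 - (kk'' + 1) + 1, by ring⟩, one_smul]
        · have hge2 : p'' + 1 - (kk'' + 1) + 2 ≤ d.val := by omega
          have hψ0 : TI (psi 𝒜 M (kk'' + 1) (p'' + 1) φ) u σ' X Y a d = 0 :=
            TI_zero _ u σ' X Y a d (hrψ _ _ _
              (rightDeg_of_idAt (idAt_del_right (Chain.cons u σ') d.val (kk'' + 1) hid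
                (by have := d.isLt; omega) (by omega)) (le_refl _)) _ _ _)
          have hφ0 : TI φ u (insL σ' (p'' + 1 - (kk'' + 1))) X Y a d.castSucc = 0 :=
            TI_zero φ u (insL σ' (p'' + 1 - (kk'' + 1))) X Y a d.castSucc (hr _ _ _
              (rightDeg_of_idAt (idAt_del_right
                (Chain.cons u (insL σ' (p'' + 1 - (kk'' + 1)))) d.val (kk'' + 1) hIdIns
                (by have := d.isLt; omega) (by omega)) (le_refl _)) _ _ _)
          rw [hψ0, hφ0, castV_zero, smul_zero]
    have h2 : ∀ d : Fin (p'' + 1), d.val = (p'' + 1 - (kk'' + 1)) + 1 →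
        TI (psi 𝒜 M (kk'' + 1) (p'' + 1) φ) u σ' X Y a d = 0 := by
      intro d hd
      exact TI_zero _ u σ' X Y a d (hrψ _ _ _
        (rightDeg_of_idAt (idAt_del_right (Chain.cons u σ') d.val (kk'' + 1) hid
          (by have := d.isLt; omega) (by omega)) (le_refl _)) _ _ _)
    have h3 : ∀ e : Fin (p'' + 1 + 1), (p'' + 1 - (kk'' + 1)) + 2 ≤ e.val →
        ((-1 : ℤ) ^ (p'' + 1 - (kk'' + 1) + 1)) •
          M.castV e₁ e₂ (TI φ u (insL σ' (p'' + 1 - (kk'' + 1))) X Y a e) = 0 := by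
      intro e he
      have hφ0 : TI φ u (insL σ' (p'' + 1 - (kk'' + 1))) X Y a e = 0 :=
        TI_zero φ u (insL σ' (p'' + 1 - (kk'' + 1))) X Y a e (hr _ _ _
          (rightDeg_of_idAt (idAt_del_right
            (Chain.cons u (insL σ' (p'' + 1 - (kk'' + 1)))) e.val (kk'' + 1) hIdIns
            (by have := e.isLt; omega) (by omega)) (le_refl _)) _ _ _)
      rw [hφ0, castV_zero, smul_zero]
    have hSum := sum_shift (by omega)
      (fun d => TI (psi 𝒜 M (kk'' + 1) (p'' + 1) φ) u σ' X Y a d)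
      (fun e => ((-1 : ℤ) ^ (p'' + 1 - (kk'' + 1) + 1)) •
        M.castV e₁ e₂ (TI φ u (insL σ' (p'' + 1 - (kk'' + 1))) X Y a e))
      hmatch h2 h3
    have hT2ψ : T2 (psi 𝒜 M (kk'' + 1) (p'' + 1) φ) u σ' X Y a = 0 :=
      T2_zero _ _ _ _ _ _ (hrψ _ _ _
        (rightDeg_of_idAt (idAt_initLast (Chain.cons u σ') kk'' hid) (le_refl _)) _ _ _)
    have hT2Ins : T2 φ u (insL σ' (p'' + 1 - (kk'' + 1))) X Y a = 0 :=
      T2_zero _ _ _ _ _ _ (hr _ _ _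
        (rightDeg_of_idAt (idAt_initLast
          (Chain.cons u (insL σ' (p'' + 1 - (kk'' + 1)))) kk'' hIdIns) (le_refl _)) _ _ _)
    have hGm1 : ((-1 : ℤ) ^ (p'' + 1 - (kk'' + 1) + 1)) •
        M.castV e₁ e₂ (TI φ u (insL σ' (p'' + 1 - (kk'' + 1))) X Y a
          ⟨p'' + 1 - (kk'' + 1) + 1, by omega⟩) =
        -(φ S T (Chain.cons u σ') X Y a) := by
      rw [E_phi_right φ u σ' X Y a ⟨p'' + 1 - (kk'' + 1) + 1, by omega⟩ rfl
        (by omega) (by omega) e₁ e₂, smul_smul, ← pow_add,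
        Odd.neg_one_pow ⟨p'' + 1 - (kk'' + 1) + 1, by ring⟩, neg_one_smul]
    have hcast : (∑ e : Fin (p'' + 1 + 1), ((-1 : ℤ) ^ (p'' + 1 - (kk'' + 1) + 1)) •
        M.castV e₁ e₂ (TI φ u (insL σ' (p'' + 1 - (kk'' + 1))) X Y a e)) =
        ((-1 : ℤ) ^ (p'' + 1 - (kk'' + 1) + 1)) •
          M.castV e₁ e₂ (∑ e, TI φ u (insL σ' (p'' + 1 - (kk'' + 1))) X Y a e) := by
      rw [castV_sum, Finset.smul_sum]
    have hS : (∑ e, TI φ u (insL σ' (p'' + 1 - (kk'' + 1))) X Y a e) =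
        -(T0 φ u (insL σ' (p'' + 1 - (kk'' + 1))) X Y a) := by
      have h := hzero
      rw [hT2Ins, add_zero] at h
      exact (neg_eq_of_add_eq_zero_right h).symm
    beta_reduce at hSum
    rw [T0_match φ u σ' X Y a e₁ e₂, hSum, hT2ψ, hGm1, hcast, hS]
    simp only [castV_neg, smul_neg]
    abel

end Terms

end Prestacks

end SimpRed

end SimpRedAux

open CategoryTheory in
/-- **Statement 12.** Let `φ ∈ C̄^{p+1,q}(𝒜,M)` be a right `k`-reduced normalized cochain.
If `d_simp φ ∈ C̄^{p+2,q}(𝒜,M)` is right `(k+1)`-reduced, then there exists a right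
`k`-reduced normalized cochain `ψ ∈ C̄^{p,q}(𝒜,M)` with `φ − d_simp ψ` right
`(k+1)`-reduced. -/
theorem simp_reduction
    {k : Type u₁} [CommRing k] {𝒰 : Type u₂} [Category.{v₁} 𝒰]
    {A : 𝒰 → Type w₁} [∀ U, Category.{w₂} (A U)] [∀ U, Preadditive (A U)]
    [∀ U, Linear k (A U)] (𝒜 : Prestack k 𝒰 A) (M : Bimodule 𝒜)
    (kk p q : ℕ) (φ : Cpq 𝒜 M (p + 1) q)
    (hn : Normalized 𝒜 M φ) (hr : RightReduced 𝒜 M kk φ)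
    (hd : RightReduced 𝒜 M (kk + 1) (dSimp 𝒜 M φ)) :
    ∃ ψ : Cpq 𝒜 M p q, Normalized 𝒜 M ψ ∧ RightReduced 𝒜 M kk ψ ∧
      RightReduced 𝒜 M (kk + 1) (φ - dSimp 𝒜 M ψ) := by
  by_cases hkp : kk ≤ p
  · refine ⟨SimpRed.psi 𝒜 M kk p φ, SimpRed.psi_normalized φ hn,
      SimpRed.psi_rightReduced φ hr hkp, ?_⟩
    intro S T σ hdeg X Y a
    have hψr := SimpRed.psi_rightReduced φ hr hkp
    show φ S T σ X Y a - dSimp 𝒜 M (SimpRed.psi 𝒜 M kk p φ) S T σ X Y a = 0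
    obtain ⟨c, hc, hid⟩ := SimpRed.idAt_of_rightDeg σ (kk + 1) hdeg
    rcases Nat.lt_or_ge c (kk + 1) with hlt | hge
    · rw [hr S T σ (SimpRed.rightDeg_of_idAt hid (by omega)) X Y a,
        SimpRed.dSimp_psi_zero φ hkp hψr σ c (SimpRed.idAt_pos σ c hid) (by omega)
          hid X Y a, sub_zero]
    · have hc1 : c = kk + 1 := by omega
      subst hc1
      rw [SimpRed.dSimp_psi_id φ hkp hr hd hψr σ hid X Y a, sub_self]
  · refine ⟨0, ?_, ?_, ?_⟩
    · intro S T σ X Y a _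
      rfl
    · intro S T σ _ X Y a
      rfl
    · intro S T σ hdeg X Y a
      show φ S T σ X Y a - dSimp 𝒜 M (0 : Cpq 𝒜 M p q) S T σ X Y a = 0
      have hφ0 : φ S T σ X Y a = 0 := by
        obtain ⟨c, hc, hid⟩ := SimpRed.idAt_of_rightDeg σ (kk + 1) hdeg
        exact hr S T σ (SimpRed.rightDeg_of_idAt hid
          (by have := SimpRed.idAt_le σ c hid; omega)) X Y a
      have hd0 : dSimp 𝒜 M (0 : Cpq 𝒜 M p q) S T σ X Y a = 0 := by
        match σ with
        | .cons u σ' =>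
          rw [SimpRed.dSimp_cons,
            SimpRed.T0_zero _ _ _ _ _ _ rfl, SimpRed.T2_zero _ _ _ _ _ _ rfl,
            Finset.sum_eq_zero (fun j _ => SimpRed.TI_zero' _ _ _ _ _ _ j (fun σf => rfl))]
          simp
      rw [hφ0, hd0, sub_zero]
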